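/- Let Δ : C_n → C_n ⊗ C_n be the k-linear map defined on the monomial basis by Δ(t) = Σ_{s ⊆ t} q(s,t) · s ⊗ s^c for every n-colored forest t, where the sum is over all subforests s of t, and let ε : C_n → k be the algebra homomorphism with ε(1) = 1 and ε(t) = 0 for every nonempty tree t. Then Δ is an algebra homomorphism, Δ is coassociative ((Δ ⊗ id) ∘ Δ = (id ⊗ Δ) ∘ Δ), and ε is a counit for Δ; thus (C_n, Δ, ε) is a commutative bialgebra over k. -/

import Mathlib

/- STATEMENT 1: `C_n` (the polynomial algebra on isomorphism classes of
n-colored rooted trees) with the comultiplication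
`Δ(t) = Σ_{s ⊆ t} q(s,t) · s ⊗ s^c` (sum over subforests) and the counit
`ε(1) = 1, ε(t) = 0` is a commutative bialgebra: Δ is an algebra map
satisfying this formula on every forest monomial, Δ is coassociative and
ε is a counit for Δ. -/



/- Core combinatorics of n-edge-colored rooted forests.

A forest is encoded by a finite set of vertices (natural numbers), a
parent function (pointing one step towards the root) and a coloring
function assigning to each non-root vertex the color of the edge
connecting it to its parent.  Well-formedness (`WF`) asks that the parent
function is supported on the vertex set and is acyclic. -/

open scoped Classical

noncomputable section

structure PForest (n : ℕ) where
  verts : Finset ℕ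
  parent : ℕ → Option ℕ
  color : ℕ → Fin n

namespace PForest

variable {n : ℕ}

/-- well-formedness: edges join vertices, and the parent relation is
acyclic. -/
def WF (t : PForest n) : Prop :=
  (∀ v w : ℕ, t.parent v = some w → v ∈ t.verts ∧ w ∈ t.verts) ∧
    ∃ rk : ℕ → ℕ, ∀ v w : ℕ, t.parent v = some w → rk w < rk v

/-- one step towards the root: `w` is the parent of `v`. -/
def Step (t : PForest n) (v w : ℕ) : Prop := t.parent v = some w

/-- `w` lies (weakly) on the path from `v` to the root of its component. -/
def Anc (t : PForest n) (v w : ℕ) : Prop := Relation.ReflTransGen t.Step v w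

def nearestAncAux (t : PForest n) (S : Finset ℕ) : ℕ → ℕ → Option ℕ
  | 0, _ => none
  | fuel + 1, v =>
    match t.parent v with
    | none => none
    | some w => if w ∈ S then some w else nearestAncAux t S fuel w

/-- the first vertex of `S` strictly below `v`; this is the parent of `v`
in the subforest induced on `S`. -/
def nearestAnc (t : PForest n) (S : Finset ℕ) (v : ℕ) : Option ℕ :=
  nearestAncAux t S t.verts.card v

def lastBeforeAux (t : PForest n) (S : Finset ℕ) : ℕ → ℕ → ℕ
  | 0, v => v
  | fuel + 1, v =>
    match t.parent v with
    | none => v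
    | some w => if w ∈ S then v else lastBeforeAux t S fuel w

/-- the last vertex on the path from `v` down to `nearestAnc t S v`
before reaching it; the color of the edge of the induced subforest below
`v` is the (ambient) color of this vertex. -/
def lastBefore (t : PForest n) (S : Finset ℕ) (v : ℕ) : ℕ :=
  lastBeforeAux t S t.verts.card v

/-- `pcount t S s j v` is the number of edges of (induced) color `j` on
the path from `v` to the root of its component in the subforest of `t`
induced on `S`, whose lower vertex lies outside `s`.  (Edges of the
induced subforest are indexed by their upper vertex `x`; the lower vertex
is `nearestAnc t S x` and the induced color is the ambient color of
`lastBefore t S x`.) -/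
def pcount (t : PForest n) (S s : Finset ℕ) (j : Fin n) (v : ℕ) : ℕ :=
  (S.filter fun x => t.Anc v x ∧ t.color (t.lastBefore S x) = j ∧
      ∃ w, t.nearestAnc S x = some w ∧ w ∉ s).card

/-- the subforest of `u` induced on `S`, as a forest in its own right. -/
def restrict (u : PForest n) (S : Finset ℕ) : PForest n where
  verts := S ∩ u.verts
  parent := fun v => if v ∈ S ∩ u.verts then u.nearestAnc S v else none
  color := fun v => u.color (u.lastBefore S v)

/-- a forest is a (nonempty) tree when it has exactly one root. -/
def IsTree (t : PForest n) : Prop :=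
  (t.verts.filter fun v => t.parent v = none).card = 1

/-- `e` is an isomorphism of n-colored forests from `s` to `t`: a
bijection of the vertices preserving the parent relation and the colors
of edges. -/
def IsIsoFn (s t : PForest n) (e : {x // x ∈ s.verts} ≃ {x // x ∈ t.verts}) : Prop :=
  (∀ v w : {x // x ∈ s.verts},
      s.parent (v : ℕ) = some (w : ℕ) ↔ t.parent ((e v : ℕ)) = some ((e w : ℕ))) ∧
    ∀ v : {x // x ∈ s.verts}, (s.parent (v : ℕ)).isSome →
      t.color ((e v : ℕ)) = s.color (v : ℕ)

/-- isomorphism of n-colored forests. -/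
def PIso (s t : PForest n) : Prop := ∃ e, IsIsoFn s t e

end PForest

/-- a (well-formed, nonempty) n-colored rooted tree. -/
def TreeObj (n : ℕ) : Type := {t : PForest n // t.WF ∧ t.IsTree}

/-- isomorphism classes of n-colored rooted trees. -/
def TreeClass (n : ℕ) : Type := Quot fun a b : TreeObj n => PForest.PIso a.1 b.1

/-- the one-vertex tree. -/
def unitTree (n : ℕ) [NeZero n] : PForest n :=
  ⟨{0}, fun _ => none, fun _ => 0⟩

theorem unitTree_wf (n : ℕ) [NeZero n] : (unitTree n).WF :=
  ⟨fun v w h => by simp [unitTree] at h, ⟨id, fun v w h => by simp [unitTree] at h⟩⟩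

theorem unitTree_isTree (n : ℕ) [NeZero n] : (unitTree n).IsTree := by
  simp [PForest.IsTree, unitTree]

def defaultTreeObj (n : ℕ) [NeZero n] : TreeObj n :=
  ⟨unitTree n, unitTree_wf n, unitTree_isTree n⟩

/-- the isomorphism class of a tree (junk value: the class of the
one-vertex tree, if the given forest is not a well-formed tree). -/
def mkClass {n : ℕ} [NeZero n] (t : PForest n) : TreeClass n :=
  if h : t.WF ∧ t.IsTree then Quot.mk _ (⟨t, h⟩ : TreeObj n)
  else Quot.mk _ (defaultTreeObj n)

end

noncomputable section

open PForest TensorProduct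

variable (K : Type*) [Field K] {n : ℕ}

namespace PForest

/-- the component of the subforest induced on `S` rooted at `r`: the set
of `x ∈ S` whose path to the root passes through `r`. -/
def compSet (u : PForest n) (S : Finset ℕ) (r : ℕ) : Finset ℕ :=
  S.filter fun x => u.Anc x r

/-- the roots of the subforest induced on `S`: the elements of `S` with
no further element of `S` strictly below them. -/
def sroots (u : PForest n) (S : Finset ℕ) : Finset ℕ :=
  S.filter fun r => ∀ w ∈ S, u.Anc r w → w = r

end PForest

/-- `C_n`: the polynomial algebra on the isomorphism classes of
n-colored rooted trees; its monomial basis is given by the (isomorphism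
classes of) n-colored forests. -/
abbrev Cn (K : Type*) [Field K] (n : ℕ) : Type _ := MvPolynomial (TreeClass n) K

/-- the basis monomial of `C_n` corresponding to the subforest of `u`
induced on `S`: the product of the classes of its components. -/
def forestMonomial [NeZero n] (u : PForest n) (S : Finset ℕ) : Cn K n :=
  ∏ r ∈ PForest.sroots u S, MvPolynomial.X (mkClass (u.restrict (PForest.compSet u S r)))

/-- the coefficient `q(s,T)` (for `s` a subforest of the subforest of `u`
induced on `T`), for parameters `q1 j = q_{1j}`, `q2 j = q_{2j}`:
`q(s,T) = ∏_j q_{1j}^{Σ_{v∈s} p_j(v,s,T)} · ∏_j q_{2j}^{Σ_{v∈T∖s} p_j(v,T∖s,T)}`. -/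
def qcoef (q1 q2 : Fin n → K) (u : PForest n) (T s : Finset ℕ) : K :=
  (∏ j : Fin n, q1 j ^ ∑ v ∈ s, u.pcount T s j v) *
    ∏ j : Fin n, q2 j ^ ∑ v ∈ T \ s, u.pcount T (T \ s) j v

/-- `Δ(t) = Σ_{s ⊆ t} q(s,t) · s ⊗ s^c`, for a concrete forest `u`. -/
def subforestSum [NeZero n] (q1 q2 : Fin n → K) (u : PForest n) :
    Cn K n ⊗[K] Cn K n :=
  ∑ S ∈ u.verts.powerset,
    qcoef K q1 q2 u u.verts S •
      (forestMonomial K u S ⊗ₜ[K] forestMonomial K u (u.verts \ S))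

/-- the comultiplication of `C_n`, as the algebra map determined by the
subforest formula on (representatives of) tree classes. -/
def DeltaC [NeZero n] (q1 q2 : Fin n → K) :
    Cn K n →ₐ[K] Cn K n ⊗[K] Cn K n :=
  MvPolynomial.aeval fun T => subforestSum K q1 q2 (Quot.out T).1

/-- the counit of `C_n`: the algebra map vanishing on every tree. -/
def epsC [NeZero n] : Cn K n →ₐ[K] K :=
  MvPolynomial.aeval fun _ : TreeClass n => (0 : K)

end

/-! ### Auxiliary development -/

noncomputable section Aux

open Relation

namespace PForest

variable {n : ℕ} {u : PForest n}

theorem step_det {v w w' : ℕ} (h : u.Step v w) (h' : u.Step v w') : w = w' := by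
  unfold Step at h h'; rw [h] at h'; exact Option.some.inj h'

theorem WF.step_mem (h : u.WF) {v w : ℕ} (hs : u.Step v w) :
    v ∈ u.verts ∧ w ∈ u.verts := h.1 v w hs

theorem WF.transGen_mem (h : u.WF) {v w : ℕ} (hs : TransGen u.Step v w) :
    w ∈ u.verts := by
  induction hs with
  | single h1 => exact (h.step_mem h1).2
  | tail _ h1 _ => exact (h.step_mem h1).2

theorem WF.anc_mem (h : u.WF) {v w : ℕ} (hs : u.Anc v w) (hv : v ∈ u.verts) :
    w ∈ u.verts := by
  rcases reflTransGen_iff_eq_or_transGen.1 hs with rfl | ht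
  · exact hv
  · exact h.transGen_mem ht

theorem WF.not_transGen_self (h : u.WF) (v : ℕ) : ¬ TransGen u.Step v v := by
  obtain ⟨-, rk, hrk⟩ := h
  have key : ∀ a b, TransGen u.Step a b → rk b < rk a := by
    intro a b hab
    induction hab with
    | single h1 => exact hrk _ _ h1
    | tail _ h1 ih => exact (hrk _ _ h1).trans ih
  exact fun hvv => lt_irrefl _ (key v v hvv)

theorem WF.anc_antisymm (h : u.WF) {v w : ℕ} (h1 : u.Anc v w) (h2 : u.Anc w v) :
    v = w := by
  rcases reflTransGen_iff_eq_or_transGen.1 h1 with rfl | t1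
  · rfl
  rcases reflTransGen_iff_eq_or_transGen.1 h2 with rfl | t2
  · rfl
  exact absurd (t1.trans t2) (h.not_transGen_self v)

theorem anc_of_parent_none {v y : ℕ} (hv : u.parent v = none) (h : u.Anc v y) :
    y = v := by
  rcases h.cases_head with rfl | ⟨c, hc, -⟩
  · rfl
  · unfold Step at hc; rw [hv] at hc; exact absurd hc (by simp)

/-- two vertices on the path from `v` are comparable. -/
theorem anc_comparable {v x y : ℕ} (hx : u.Anc v x) :
    u.Anc v y → u.Anc x y ∨ u.Anc y x := by
  induction hx using Relation.ReflTransGen.head_induction_on with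
  | refl => exact fun hy => Or.inl hy
  | head hstep htail ih =>
    intro hy
    rcases hy.cases_head with rfl | ⟨w', hw', hy'⟩
    · exact Or.inr (Relation.ReflTransGen.head hstep htail)
    · exact ih (step_det hstep hw' ▸ hy')

/-- strict ancestors of a vertex (within the vertex set). -/
def sAnc (u : PForest n) (v : ℕ) : Finset ℕ :=
  u.verts.filter fun x => TransGen u.Step v x

theorem sAnc_card_le (v : ℕ) : (u.sAnc v).card ≤ u.verts.card :=
  Finset.card_le_card (Finset.filter_subset _ _)

theorem WF.sAnc_lt (h : u.WF) {v w : ℕ} (hs : u.Step v w) :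
    (u.sAnc w).card < (u.sAnc v).card := by
  apply Finset.card_lt_card
  constructor
  · intro x hx
    simp only [sAnc, Finset.mem_filter] at hx ⊢
    exact ⟨hx.1, TransGen.head hs hx.2⟩
  · intro hsub
    have hw : w ∈ u.sAnc v := by
      simp only [sAnc, Finset.mem_filter]
      exact ⟨(h.step_mem hs).2, TransGen.single hs⟩
    have := hsub hw
    simp only [sAnc, Finset.mem_filter] at this
    exact h.not_transGen_self w this.2

theorem WF.parent_none_of_sAnc_zero (h : u.WF) {v : ℕ}
    (h0 : (u.sAnc v).card = 0) : u.parent v = none := by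
  cases hp : u.parent v with
  | none => rfl
  | some w =>
    exfalso
    have hw : w ∈ u.sAnc v := by
      simp only [sAnc, Finset.mem_filter]
      exact ⟨(h.step_mem hp).2, TransGen.single hp⟩
    rw [Finset.card_eq_zero.1 h0] at hw
    exact absurd hw (Finset.notMem_empty w)

/-- specification of `lastBefore`. -/
def LBspec (u : PForest n) (S : Finset ℕ) (v x : ℕ) : Prop :=
  u.Anc v x ∧ (∀ y w, u.Anc v y → TransGen u.Step y x → u.Step y w → w ∉ S) ∧
    ∀ w, u.Step x w → w ∈ S

theorem LBspec_self {v : ℕ} {S : Finset ℕ}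
    (h : ∀ w, u.Step v w → w ∈ S) (hwf : u.WF) : u.LBspec S v v :=
  ⟨ReflTransGen.refl,
   fun y w hvy hyv _ => absurd (TransGen.trans_right hvy hyv)
     (hwf.not_transGen_self v), h⟩

theorem LBspec_unique (hwf : u.WF) {S : Finset ℕ} {v x x' : ℕ}
    (h : u.LBspec S v x) (h' : u.LBspec S v x') : x = x' := by
  have key : ∀ a b : ℕ, u.LBspec S v a → u.LBspec S v b →
      TransGen u.Step a b → False := by
    intro a b ha hb hab
    obtain ⟨c, hac, hcb⟩ := TransGen.head'_iff.1 hab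
    exact hb.2.1 a c ha.1 hab hac (ha.2.2 c hac)
  rcases anc_comparable h.1 h'.1 with hc | hc
  · rcases reflTransGen_iff_eq_or_transGen.1 hc with rfl | ht
    · rfl
    · exact absurd (key _ _ h h' ht) not_false
  · rcases reflTransGen_iff_eq_or_transGen.1 hc with rfl | ht
    · rfl
    · exact absurd (key _ _ h' h ht) not_false

theorem lastBeforeAux_spec (hwf : u.WF) (S : Finset ℕ) :
    ∀ (f : ℕ) (v : ℕ), (u.sAnc v).card ≤ f → u.LBspec S v (u.lastBeforeAux S f v) := by
  intro f
  induction f with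
  | zero =>
    intro v hv
    simp only [lastBeforeAux]
    refine LBspec_self (fun w hw => ?_) hwf
    have hnone := hwf.parent_none_of_sAnc_zero (Nat.le_zero.1 hv)
    unfold Step at hw
    rw [hnone] at hw
    cases hw
  | succ f ih =>
    intro v hv
    simp only [lastBeforeAux]
    cases hp : u.parent v with
    | none =>
      exact LBspec_self (fun w hw => by
        unfold Step at hw; rw [hp] at hw; exact absurd hw (by simp)) hwf
    | some w =>
      by_cases hwS : w ∈ S
      · simp only [hwS, if_true]
        exact LBspec_self (fun w' hw' => step_det hw' hp ▸ hwS) hwf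
      · simp only [hwS, if_false]
        have hstep : u.Step v w := hp
        have hcard : (u.sAnc w).card ≤ f :=
          Nat.lt_succ_iff.1 (lt_of_lt_of_le (hwf.sAnc_lt hstep) hv)
        obtain ⟨h1, h2, h3⟩ := ih w hcard
        refine ⟨ReflTransGen.head hstep h1, ?_, h3⟩
        intro y w' hvy hyx hyw'
        rcases hvy.cases_head with rfl | ⟨c, hc, hy'⟩
        · exact step_det hyw' hstep ▸ hwS
        · exact h2 y w' (step_det hc hstep ▸ hy') hyx hyw'

theorem lastBefore_spec (hwf : u.WF) (S : Finset ℕ) (v : ℕ) :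
    u.LBspec S v (u.lastBefore S v) :=
  lastBeforeAux_spec hwf S _ v (sAnc_card_le v)

theorem nearestAncAux_eq (hwf : u.WF) (S : Finset ℕ) :
    ∀ (f : ℕ) (v : ℕ), (u.sAnc v).card ≤ f →
      u.nearestAncAux S f v = u.parent (u.lastBeforeAux S f v) := by
  intro f
  induction f with
  | zero =>
    intro v hv
    simp only [nearestAncAux, lastBeforeAux]
    exact (hwf.parent_none_of_sAnc_zero (Nat.le_zero.1 hv)).symm
  | succ f ih =>
    intro v hv
    simp only [nearestAncAux, lastBeforeAux]
    cases hp : u.parent v with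
    | none => exact hp.symm
    | some w =>
      by_cases hwS : w ∈ S
      · simp only [hwS, if_true]; exact hp.symm
      · simp only [hwS, if_false]
        exact ih w (Nat.lt_succ_iff.1 (lt_of_lt_of_le (hwf.sAnc_lt hp) hv))

theorem nearestAnc_eq_parent_lastBefore (hwf : u.WF) (S : Finset ℕ) (v : ℕ) :
    u.nearestAnc S v = u.parent (u.lastBefore S v) :=
  nearestAncAux_eq hwf S _ v (sAnc_card_le v)

theorem nearestAnc_mem (hwf : u.WF) {S : Finset ℕ} {v w : ℕ}
    (h : u.nearestAnc S v = some w) : w ∈ S := by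
  rw [nearestAnc_eq_parent_lastBefore hwf] at h
  exact (lastBefore_spec hwf S v).2.2 w h

theorem anc_lastBefore (hwf : u.WF) (S : Finset ℕ) (v : ℕ) :
    u.Anc v (u.lastBefore S v) := (lastBefore_spec hwf S v).1

/-- elements strictly past `v` but not past `lastBefore S v` are not in `S`. -/
theorem between_not_mem (hwf : u.WF) {S : Finset ℕ} {v z : ℕ}
    (hz : TransGen u.Step v z) (hzl : u.Anc z (u.lastBefore S v)) : z ∉ S := by
  obtain ⟨y, hvy, hstep⟩ := TransGen.tail'_iff.1 hz
  exact (lastBefore_spec hwf S v).2.1 y z hvy (TransGen.head' hstep hzl) hstep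

theorem nearestAnc_transGen (hwf : u.WF) {S : Finset ℕ} {v w : ℕ}
    (h : u.nearestAnc S v = some w) : TransGen u.Step v w := by
  rw [nearestAnc_eq_parent_lastBefore hwf] at h
  exact TransGen.tail' (anc_lastBefore hwf S v) h

/-- characterization: `nearestAnc S v = none` iff no ancestor of `v` is in `S`. -/
theorem nearestAnc_eq_none_iff (hwf : u.WF) {S : Finset ℕ} {v : ℕ} :
    u.nearestAnc S v = none ↔ ∀ x, TransGen u.Step v x → x ∉ S := by
  constructor
  · intro h x hx hxS
    rcases anc_comparable (u := u) hx.to_reflTransGen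
        (anc_lastBefore hwf S v) with hc | hc
    · exact between_not_mem hwf hx hc hxS
    · rw [nearestAnc_eq_parent_lastBefore hwf] at h
      have := anc_of_parent_none h hc
      subst this
      exact between_not_mem hwf hx ReflTransGen.refl hxS
  · intro h
    rw [nearestAnc_eq_parent_lastBefore hwf]
    cases hp : u.parent (u.lastBefore S v) with
    | none => rfl
    | some w =>
      exfalso
      have hwS := (lastBefore_spec hwf S v).2.2 w hp
      exact h w (TransGen.tail' (anc_lastBefore hwf S v) hp) hwS

/-- characterization of `nearestAnc S v = some w`. -/
theorem nearestAnc_eq_some_iff (hwf : u.WF) {S : Finset ℕ} {v w : ℕ} :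
    u.nearestAnc S v = some w ↔
      TransGen u.Step v w ∧ w ∈ S ∧
        ∀ z, TransGen u.Step v z → TransGen u.Step z w → z ∉ S := by
  constructor
  · intro h
    refine ⟨nearestAnc_transGen hwf h, nearestAnc_mem hwf h, ?_⟩
    intro z hvz hzw hzS
    rw [nearestAnc_eq_parent_lastBefore hwf] at h
    -- z is strictly between v and w, hence weakly before lastBefore
    have hzl : u.Anc z (u.lastBefore S v) := by
      rcases anc_comparable (u := u) hvz.to_reflTransGen
          (anc_lastBefore hwf S v) with hc | hc
      · exact hc
      · -- lastBefore ≤ z, but z < w = parent lastBefore : contradiction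
        rcases reflTransGen_iff_eq_or_transGen.1 hc with rfl | ht
        · exact ReflTransGen.refl
        · exfalso
          -- TransGen lastBefore z: so Anc w z
          obtain ⟨c, hc1, hc2⟩ := TransGen.head'_iff.1 ht
          have hcw : c = w := step_det hc1 h
          rw [← hcw] at hzw
          exact hwf.not_transGen_self c (TransGen.trans_right hc2 hzw)
    exact between_not_mem hwf hvz hzl hzS
  · rintro ⟨hvw, hwS, hmid⟩
    rw [nearestAnc_eq_parent_lastBefore hwf]
    set L := u.lastBefore S v with hL
    -- compare w with L
    cases hp : u.parent L with
    | none =>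
      exfalso
      rcases anc_comparable (u := u) hvw.to_reflTransGen
          (anc_lastBefore hwf S v) with hc | hc
      · exact between_not_mem hwf hvw hc hwS
      · have := anc_of_parent_none hp hc
        subst this
        exact between_not_mem hwf hvw ReflTransGen.refl hwS
    | some c =>
      have hcS := (lastBefore_spec hwf S v).2.2 c hp
      have hvc : TransGen u.Step v c := TransGen.tail' (anc_lastBefore hwf S v) hp
      rcases anc_comparable (u := u) hvw.to_reflTransGen hvc.to_reflTransGen with hc | hc
      · rcases reflTransGen_iff_eq_or_transGen.1 hc with rfl | ht
        · rfl
        · -- w strictly before c : w weakly before L, so w ∉ S; contradiction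
          exfalso
          -- TransGen w c with parent L = c: w Anc L
          have hwL : u.Anc w L := by
            rcases anc_comparable (u := u) hvw.to_reflTransGen
                (anc_lastBefore hwf S v) with h1 | h1
            · exact h1
            · rcases reflTransGen_iff_eq_or_transGen.1 h1 with rfl | ht2
              · exact ReflTransGen.refl
              · exfalso
                obtain ⟨d, hd1, hd2⟩ := TransGen.head'_iff.1 ht2
                have hdc : d = c := step_det hd1 hp
                rw [← hdc] at ht
                exact hwf.not_transGen_self d (TransGen.trans_right hd2 ht)
          exact between_not_mem hwf hvw hwL hwS
      · rcases reflTransGen_iff_eq_or_transGen.1 hc with rfl | ht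
        · rfl
        · exact absurd hcS (hmid c hvc ht)

theorem option_eq_of_some_iff {o o' : Option ℕ}
    (h : ∀ w, o = some w ↔ o' = some w) : o = o' := by
  cases o with
  | none =>
    cases o' with
    | none => rfl
    | some w => exact ((h w).2 rfl)
  | some w => exact ((h w).1 rfl).symm

theorem rk_lt_of_transGen {rk : ℕ → ℕ}
    (hrk : ∀ v w, u.Step v w → rk w < rk v) {v w : ℕ}
    (h : TransGen u.Step v w) : rk w < rk v := by
  induction h with
  | single h1 => exact hrk _ _ h1
  | tail _ h1 ih => exact (hrk _ _ h1).trans ih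

theorem WF.sAnc_lt_of_transGen (hwf : u.WF) {v w : ℕ}
    (h : TransGen u.Step v w) : (u.sAnc w).card < (u.sAnc v).card := by
  apply Finset.card_lt_card
  constructor
  · intro x hx
    simp only [sAnc, Finset.mem_filter] at hx ⊢
    exact ⟨hx.1, h.trans hx.2⟩
  · intro hsub
    have hw : w ∈ u.sAnc v := by
      simp only [sAnc, Finset.mem_filter]
      exact ⟨hwf.transGen_mem h, h⟩
    have := hsub hw
    simp only [sAnc, Finset.mem_filter] at this
    exact hwf.not_transGen_self w this.2

/-! #### the restricted forest -/

theorem step_restrict_iff {S : Finset ℕ} {v w : ℕ} :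
    (u.restrict S).Step v w ↔ v ∈ S ∩ u.verts ∧ u.nearestAnc S v = some w := by
  unfold Step restrict
  by_cases h : v ∈ S ∩ u.verts <;> simp [h]

theorem WF.restrict (hwf : u.WF) (S : Finset ℕ) : (u.restrict S).WF := by
  constructor
  · intro v w h
    have h' : (u.restrict S).Step v w := h
    rw [step_restrict_iff] at h'
    have hw1 : w ∈ S := nearestAnc_mem hwf h'.2
    have hw2 : w ∈ u.verts := hwf.transGen_mem (nearestAnc_transGen hwf h'.2)
    exact ⟨h'.1, by simp only [PForest.restrict]; exact Finset.mem_inter.2 ⟨hw1, hw2⟩⟩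
  · obtain ⟨h1, rk, hrk⟩ := hwf
    refine ⟨rk, fun v w h => ?_⟩
    have h' : (u.restrict S).Step v w := h
    rw [step_restrict_iff] at h'
    exact rk_lt_of_transGen hrk (nearestAnc_transGen ⟨h1, rk, hrk⟩ h'.2)

theorem restrict_transGen_iff (hwf : u.WF) {S : Finset ℕ} {v x : ℕ} :
    TransGen (u.restrict S).Step v x ↔
      v ∈ S ∩ u.verts ∧ x ∈ S ∧ TransGen u.Step v x := by
  constructor
  · intro h
    induction h with
    | single h1 =>
      rw [step_restrict_iff] at h1
      exact ⟨h1.1, nearestAnc_mem hwf h1.2, nearestAnc_transGen hwf h1.2⟩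
    | tail _ h1 ih =>
      rw [step_restrict_iff] at h1
      exact ⟨ih.1, nearestAnc_mem hwf h1.2,
        ih.2.2.trans (nearestAnc_transGen hwf h1.2)⟩
  · rintro ⟨hv, hx, hvx⟩
    -- induction on the number of strict ancestors
    have key : ∀ N v, (u.sAnc v).card ≤ N → v ∈ S ∩ u.verts →
        TransGen u.Step v x → TransGen (u.restrict S).Step v x := by
      intro N
      induction N with
      | zero =>
        intro v hN hv hvx
        obtain ⟨c, hc, -⟩ := TransGen.head'_iff.1 hvx
        unfold Step at hc
        rw [hwf.parent_none_of_sAnc_zero (Nat.le_zero.1 hN)] at hc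
        cases hc
      | succ N ih =>
        intro v hN hv hvx
        have hne : u.nearestAnc S v ≠ none := by
          intro hnone
          exact (nearestAnc_eq_none_iff hwf).1 hnone x hvx hx
        obtain ⟨w, hw⟩ := Option.ne_none_iff_exists'.1 hne
        have hstep : (u.restrict S).Step v w := step_restrict_iff.2 ⟨hv, hw⟩
        obtain ⟨hvw, hwS, hmid⟩ := (nearestAnc_eq_some_iff hwf).1 hw
        by_cases hwx : w = x
        · exact hwx ▸ TransGen.single hstep
        · have hcomp : u.Anc w x ∨ u.Anc x w :=
            anc_comparable hvw.to_reflTransGen hvx.to_reflTransGen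
          have hwx' : TransGen u.Step w x := by
            rcases hcomp with hc | hc
            · rcases reflTransGen_iff_eq_or_transGen.1 hc with rfl | ht
              · exact absurd rfl hwx
              · exact ht
            · rcases reflTransGen_iff_eq_or_transGen.1 hc with rfl | ht
              · exact absurd rfl hwx
              · exact absurd hx (hmid x hvx ht)
          have hwv : w ∈ S ∩ u.verts :=
            Finset.mem_inter.2 ⟨hwS, hwf.transGen_mem hvw⟩
          have hcard : (u.sAnc w).card ≤ N :=
            Nat.lt_succ_iff.1 (lt_of_lt_of_le (hwf.sAnc_lt_of_transGen hvw) hN)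
          exact TransGen.head hstep (ih w hcard hwv hwx')
    exact key _ v le_rfl hv hvx

theorem restrict_anc_iff (hwf : u.WF) {S : Finset ℕ} {v x : ℕ} :
    (u.restrict S).Anc v x ↔
      x = v ∨ (v ∈ S ∩ u.verts ∧ x ∈ S ∧ TransGen u.Step v x) := by
  unfold Anc
  rw [reflTransGen_iff_eq_or_transGen, restrict_transGen_iff hwf]

theorem restrict_anc_iff' (hwf : u.WF) {S : Finset ℕ} {v x : ℕ}
    (hv : v ∈ S ∩ u.verts) (hx : x ∈ S) :
    (u.restrict S).Anc v x ↔ u.Anc v x := by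
  constructor
  · intro h
    rcases (restrict_anc_iff hwf).1 h with rfl | ⟨-, -, h2⟩
    · exact ReflTransGen.refl
    · exact h2.to_reflTransGen
  · intro h
    rcases reflTransGen_iff_eq_or_transGen.1 h with rfl | ht
    · exact ReflTransGen.refl
    · exact (restrict_anc_iff hwf).2 (Or.inr ⟨hv, hx, ht⟩)

/-- the nearest `D`-ancestor computed in `restrict S` equals the one in `u`. -/
theorem restrict_nearestAnc (hwf : u.WF) {S D : Finset ℕ} (hDS : D ⊆ S)
    {v : ℕ} (hv : v ∈ S ∩ u.verts) :
    (u.restrict S).nearestAnc D v = u.nearestAnc D v := by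
  apply option_eq_of_some_iff
  intro w
  rw [nearestAnc_eq_some_iff (hwf.restrict S), nearestAnc_eq_some_iff hwf]
  constructor
  · rintro ⟨h1, h2, h3⟩
    rw [restrict_transGen_iff hwf] at h1
    refine ⟨h1.2.2, h2, fun z hz1 hz2 hzD => ?_⟩
    refine h3 z ?_ ?_ hzD
    · exact (restrict_transGen_iff hwf).2 ⟨hv, hDS hzD, hz1⟩
    · exact (restrict_transGen_iff hwf).2
        ⟨Finset.mem_inter.2 ⟨hDS hzD, hwf.transGen_mem hz1⟩, hDS h2, hz2⟩
  · rintro ⟨h1, h2, h3⟩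
    refine ⟨(restrict_transGen_iff hwf).2 ⟨hv, hDS h2, h1⟩, h2, fun z hz1 hz2 hzD => ?_⟩
    rw [restrict_transGen_iff hwf] at hz1 hz2
    exact h3 z hz1.2.2 hz2.2.2 hzD

theorem lastBefore_self_of (hwf : u.WF) {S : Finset ℕ} {x : ℕ}
    (h : ∀ w, u.Step x w → w ∈ S) : u.lastBefore S x = x :=
  LBspec_unique hwf (lastBefore_spec hwf S x) (LBspec_self h hwf)

theorem restrict_lastBefore_self (hwf : u.WF) (S : Finset ℕ) (v : ℕ) :
    (u.restrict S).lastBefore S v = v :=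
  lastBefore_self_of (hwf.restrict S)
    (fun w hw => nearestAnc_mem hwf (step_restrict_iff.1 hw).2)

theorem nearestAnc_of_parent_mem (hwf : u.WF) {S : Finset ℕ} {x w : ℕ}
    (hx : u.parent x = some w) (hw : w ∈ S) : u.nearestAnc S x = some w := by
  rw [nearestAnc_eq_some_iff hwf]
  refine ⟨TransGen.single hx, hw, fun z hz1 hz2 hzS => ?_⟩
  obtain ⟨c, hc1, hc2⟩ := TransGen.head'_iff.1 hz1
  have hcw : c = w := step_det hc1 hx
  rw [hcw] at hc2
  rcases reflTransGen_iff_eq_or_transGen.1 hc2 with rfl | ht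
  · exact hwf.not_transGen_self _ hz2
  · exact hwf.not_transGen_self w (ht.trans hz2)

theorem nearestAnc_of_parent_none (hwf : u.WF) {S : Finset ℕ} {x : ℕ}
    (hx : u.parent x = none) : u.nearestAnc S x = none := by
  rw [nearestAnc_eq_none_iff hwf]
  intro z hz
  obtain ⟨c, hc, -⟩ := TransGen.head'_iff.1 hz
  unfold Step at hc; rw [hx] at hc; cases hc

theorem nearestAnc_verts (hwf : u.WF) (x : ℕ) :
    u.nearestAnc u.verts x = u.parent x := by
  cases hp : u.parent x with
  | none => exact nearestAnc_of_parent_none hwf hp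
  | some w => exact nearestAnc_of_parent_mem hwf hp (hwf.step_mem hp).2

theorem lastBefore_verts (hwf : u.WF) (x : ℕ) :
    u.lastBefore u.verts x = x :=
  lastBefore_self_of hwf (fun w hw => (hwf.step_mem hw).2)

/-- the composite of `lastBefore`s for nested vertex sets. -/
theorem lastBefore_restrict_comp (hwf : u.WF) {S D : Finset ℕ} (hDS : D ⊆ S)
    {v : ℕ} (hv : v ∈ S ∩ u.verts) :
    u.lastBefore S ((u.restrict S).lastBefore D v) = u.lastBefore D v := by
  obtain ⟨c, hcdef⟩ : ∃ c, (u.restrict S).lastBefore D v = c := ⟨_, rfl⟩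
  obtain ⟨hc1, hc2, hc3⟩ := hcdef ▸ lastBefore_spec (hwf.restrict S) D v
  have hcS : c ∈ S ∩ u.verts := by
    rcases (restrict_anc_iff hwf).1 hc1 with rfl | ⟨-, h1, h2⟩
    · exact hv
    · exact Finset.mem_inter.2 ⟨h1, hwf.transGen_mem h2⟩
  have hvc : u.Anc v c := by
    rcases (restrict_anc_iff hwf).1 hc1 with rfl | ⟨-, -, h2⟩
    · exact ReflTransGen.refl
    · exact h2.to_reflTransGen
  obtain ⟨x, hxdef⟩ : ∃ x, u.lastBefore S c = x := ⟨_, rfl⟩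
  obtain ⟨hx1, hx2, hx3⟩ := hxdef ▸ lastBefore_spec hwf S c
  rw [hcdef, hxdef]
  symm
  apply LBspec_unique hwf (lastBefore_spec hwf D v)
  refine ⟨hvc.trans hx1, ?_, ?_⟩
  · -- middle clause
    intro y w hvy hyx hyw hwD
    rcases anc_comparable hvy hvc with hyc | hcy
    · rcases reflTransGen_iff_eq_or_transGen.1 hyc with rfl | hyc'
      · -- c = y : the step from y = c goes into D ⊆ S, contradicting hx2
        exact hx2 _ w ReflTransGen.refl hyx hyw (hDS hwD)
      · -- y strictly before c; w = parent y ∈ D ⊆ S is on the chain before c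
        have hwSet : w ∈ S := hDS hwD
        have hwc : u.Anc w c := by
          obtain ⟨d, hd1, hd2⟩ := TransGen.head'_iff.1 hyc'
          exact step_det hyw hd1 ▸ hd2
        by_cases hwv : w = v
        · subst hwv
          exact hwf.not_transGen_self w (TransGen.tail' hvy hyw)
        · have hvw : TransGen u.Step v w := TransGen.tail' hvy hyw
          have hrvw : TransGen (u.restrict S).Step v w :=
            (restrict_transGen_iff hwf).2 ⟨hv, hwSet, hvw⟩
          obtain ⟨b, hb1, hb2⟩ := TransGen.tail'_iff.1 hrvw
          by_cases hwceq : w = c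
          · exact hc2 b w hb1 (hwceq ▸ TransGen.single hb2) hb2 hwD
          · have hwc' : TransGen u.Step w c := by
              rcases reflTransGen_iff_eq_or_transGen.1 hwc with rfl | ht
              · exact absurd rfl (Ne.symm hwceq)
              · exact ht
            have hrwc : TransGen (u.restrict S).Step w c :=
              (restrict_transGen_iff hwf).2
                ⟨Finset.mem_inter.2 ⟨hwSet, hwf.transGen_mem hvw⟩,
                  (Finset.mem_inter.1 hcS).1, hwc'⟩
            exact hc2 b w hb1 (TransGen.head hb2 hrwc) hb2 hwD
    · -- c weakly before y : use the middle clause of x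
      exact hx2 y w hcy hyx hyw (hDS hwD)
  · -- stopping clause : the parent of x lies in D
    intro w hw
    have hna : u.nearestAnc S c = some w := by
      rw [nearestAnc_eq_parent_lastBefore hwf, hxdef]; exact hw
    exact hc3 w (step_restrict_iff.2 ⟨hcS, hna⟩)

/-! #### ancestor-closed subsets, components and roots -/

/-- `C` is closed under passing to ancestors. -/
def AncClosed (u : PForest n) (C : Finset ℕ) : Prop :=
  ∀ v ∈ C, ∀ x, TransGen u.Step v x → x ∈ C

theorem mem_sroots {S : Finset ℕ} {r : ℕ} :
    r ∈ u.sroots S ↔ r ∈ S ∧ ∀ w ∈ S, u.Anc r w → w = r := by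
  simp [sroots]

theorem mem_compSet {S : Finset ℕ} {x r : ℕ} :
    x ∈ u.compSet S r ↔ x ∈ S ∧ u.Anc x r := by
  simp [compSet]

theorem anc_rk_le {rk : ℕ → ℕ} (hrk : ∀ v w, u.Step v w → rk w < rk v)
    {v w : ℕ} (h : u.Anc v w) : rk w ≤ rk v := by
  rcases reflTransGen_iff_eq_or_transGen.1 h with rfl | ht
  · exact le_refl _
  · exact le_of_lt (rk_lt_of_transGen hrk ht)

theorem sroots_verts (hwf : u.WF) :
    u.sroots u.verts = u.verts.filter fun v => u.parent v = none := by
  ext v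
  simp only [mem_sroots, Finset.mem_filter]
  constructor
  · rintro ⟨hv, h⟩
    refine ⟨hv, ?_⟩
    cases hp : u.parent v with
    | none => rfl
    | some w =>
      have hstep0 : u.Step v w := hp
      have hw : w = v := h w (hwf.step_mem hp).2 (ReflTransGen.single hstep0)
      rw [hw] at hstep0
      exact absurd (TransGen.single hstep0) (hwf.not_transGen_self v)
  · rintro ⟨hv, hp⟩
    exact ⟨hv, fun w _ hanc => anc_of_parent_none hp hanc⟩

theorem sroots_nonempty (hwf : u.WF) {S : Finset ℕ} (hS : S.Nonempty) :
    (u.sroots S).Nonempty := by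
  obtain ⟨h1, rk, hrk⟩ := hwf
  obtain ⟨r, hrS, hmin⟩ := Finset.exists_min_image S rk hS
  refine ⟨r, mem_sroots.2 ⟨hrS, fun w hwS hanc => ?_⟩⟩
  rcases reflTransGen_iff_eq_or_transGen.1 hanc with rfl | ht
  · rfl
  · exact absurd (hmin w hwS) (not_le.2 (rk_lt_of_transGen hrk ht))

theorem exists_root (hwf : u.WF) {v : ℕ} :
    ∃ r, u.Anc v r ∧ u.parent r = none := by
  have key : ∀ N v, (u.sAnc v).card ≤ N → ∃ r, u.Anc v r ∧ u.parent r = none := by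
    intro N
    induction N with
    | zero =>
      intro v hN
      exact ⟨v, ReflTransGen.refl, hwf.parent_none_of_sAnc_zero (Nat.le_zero.1 hN)⟩
    | succ N ih =>
      intro v hN
      cases hp : u.parent v with
      | none => exact ⟨v, ReflTransGen.refl, hp⟩
      | some w =>
        obtain ⟨r, hr1, hr2⟩ :=
          ih w (Nat.lt_succ_iff.1 (lt_of_lt_of_le (hwf.sAnc_lt hp) hN))
        exact ⟨r, ReflTransGen.head hp hr1, hr2⟩
  exact key _ v le_rfl

/-- components of parentless roots are ancestor-closed. -/
theorem ancClosed_compSet_root (hwf : u.WF) {r : ℕ}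
    (hr : u.parent r = none) : u.AncClosed (u.compSet u.verts r) := by
  intro v hv x hx
  obtain ⟨hv1, hv2⟩ := mem_compSet.1 hv
  refine mem_compSet.2 ⟨hwf.transGen_mem hx, ?_⟩
  rcases anc_comparable hx.to_reflTransGen hv2 with hc | hc
  · exact hc
  · exact (anc_of_parent_none hr hc) ▸ ReflTransGen.refl

theorem ancClosed_sdiff_compSet_root (hwf : u.WF) {r : ℕ} :
    u.AncClosed (u.verts \ u.compSet u.verts r) := by
  intro v hv x hx
  rw [Finset.mem_sdiff] at hv ⊢
  refine ⟨hwf.transGen_mem hx, fun hxc => hv.2 ?_⟩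
  exact mem_compSet.2 ⟨hv.1, hx.to_reflTransGen.trans (mem_compSet.1 hxc).2⟩

/-- the component of a subforest-root, as a restricted forest, is a tree. -/
theorem restrict_compSet_isTree (hwf : u.WF) {S : Finset ℕ} (hS : S ⊆ u.verts)
    {r : ℕ} (hr : r ∈ u.sroots S) :
    (u.restrict (u.compSet S r)).IsTree := by
  obtain ⟨hrS, hroot⟩ := mem_sroots.1 hr
  have hrC : r ∈ u.compSet S r := mem_compSet.2 ⟨hrS, ReflTransGen.refl⟩
  have hCV : u.compSet S r ⊆ u.verts := fun x hx => hS (mem_compSet.1 hx).1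
  unfold IsTree
  have hrmem : r ∈ (u.restrict (u.compSet S r)).verts.filter
      fun v => (u.restrict (u.compSet S r)).parent v = none := by
    have hv' : r ∈ u.compSet S r ∩ u.verts := Finset.mem_inter.2 ⟨hrC, hS hrS⟩
    refine Finset.mem_filter.2 ⟨hv', ?_⟩
    show (if r ∈ u.compSet S r ∩ u.verts then u.nearestAnc (u.compSet S r) r
      else none) = none
    rw [if_pos hv', nearestAnc_eq_none_iff hwf]
    intro z hz hzC
    have hzr : z = r := hroot z (mem_compSet.1 hzC).1 hz.to_reflTransGen
    rw [hzr] at hz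
    exact hwf.not_transGen_self r hz
  have huniq : ∀ v ∈ (u.restrict (u.compSet S r)).verts.filter
      (fun v => (u.restrict (u.compSet S r)).parent v = none), v = r := by
    intro v hv0
    obtain ⟨hv, hp⟩ := Finset.mem_filter.1 hv0
    have hv' : v ∈ u.compSet S r ∩ u.verts := hv
    have hp' : u.nearestAnc (u.compSet S r) v = none := by
      have : (if v ∈ u.compSet S r ∩ u.verts then u.nearestAnc (u.compSet S r) v
        else none) = none := hp
      rwa [if_pos hv'] at this
    have hvC := (Finset.mem_inter.1 hv').1
    obtain ⟨hvS, hvr⟩ := mem_compSet.1 hvC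
    by_contra hne
    have hvr' : TransGen u.Step v r := by
      rcases reflTransGen_iff_eq_or_transGen.1 hvr with rfl | ht
      · exact absurd rfl hne
      · exact ht
    exact (nearestAnc_eq_none_iff hwf).1 hp' r hvr' hrC
  have : ((u.restrict (u.compSet S r)).verts.filter
      fun v => (u.restrict (u.compSet S r)).parent v = none) = {r} :=
    Finset.eq_singleton_iff_unique_mem.2 ⟨hrmem, huniq⟩
  rw [this, Finset.card_singleton]

/-! #### edge counting -/

/-- counting color-`j` edges on the path from `v` in the `S`-induced forest
whose lower vertex satisfies `Q`. -/
def ecount (u : PForest n) (S : Finset ℕ) (Q : ℕ → Prop) (j : Fin n) (v : ℕ) : ℕ :=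
  (S.filter fun x => u.Anc v x ∧ u.color (u.lastBefore S x) = j ∧
      ∃ w, u.nearestAnc S x = some w ∧ Q w).card

/-- the same count at the top level, using the plain parent function. -/
def epar (u : PForest n) (Q : ℕ → Prop) (j : Fin n) (v : ℕ) : ℕ :=
  (u.verts.filter fun x => u.Anc v x ∧ u.color x = j ∧
      ∃ w, u.parent x = some w ∧ Q w).card

theorem pcount_eq_ecount (hwf : u.WF) {S s : Finset ℕ} {j : Fin n} {v : ℕ} :
    u.pcount S s j v = u.ecount S (fun w => w ∈ S ∧ w ∉ s) j v := by
  unfold pcount ecount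
  congr 1
  ext x
  simp only [Finset.mem_filter]
  constructor
  · rintro ⟨hxS, h1, h2, w, h3, h4⟩
    exact ⟨hxS, h1, h2, w, h3, nearestAnc_mem hwf h3, h4⟩
  · rintro ⟨hxS, h1, h2, w, h3, h4, h5⟩
    exact ⟨hxS, h1, h2, w, h3, h5⟩

theorem ecount_verts (hwf : u.WF) {Q : ℕ → Prop} {j : Fin n} {v : ℕ} :
    u.ecount u.verts Q j v = u.epar Q j v := by
  unfold ecount epar
  congr 1
  ext x
  simp only [Finset.mem_filter]
  rw [lastBefore_verts hwf, nearestAnc_verts hwf]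

/-- the crucial bijection: edges of the `S`-induced forest on the path from
`v` with lower vertex satisfying `Q` correspond to ambient edges with the
same lower vertex (via `lastBefore`), preserving colors. -/
theorem ecount_eq_epar (hwf : u.WF) {S : Finset ℕ} (hS : S ⊆ u.verts)
    {Q : ℕ → Prop} (hQ : ∀ w, Q w → w ∈ S) {j : Fin n} {v : ℕ} (hv : v ∈ S) :
    u.ecount S Q j v = u.epar Q j v := by
  obtain ⟨hmem, rk, hrk⟩ := hwf
  have hwf : u.WF := ⟨hmem, rk, hrk⟩
  unfold ecount epar
  apply Finset.card_bij (fun x _ => u.lastBefore S x)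
  · -- maps into the target filter
    intro x hx
    simp only [Finset.mem_filter] at hx ⊢
    obtain ⟨hxS, hanc, hcol, w, hna, hQw⟩ := hx
    have hxlb : u.Anc x (u.lastBefore S x) := anc_lastBefore hwf S x
    refine ⟨hwf.anc_mem hxlb (hS hxS), hanc.trans hxlb, hcol, w, ?_, hQw⟩
    rw [← nearestAnc_eq_parent_lastBefore hwf]
    exact hna
  · -- injective
    intro x1 hx1 x2 hx2 heq
    simp only [Finset.mem_filter] at hx1 hx2
    by_contra hne
    rcases anc_comparable hx1.2.1 hx2.2.1 with hc | hc
    · have ht : TransGen u.Step x1 x2 := by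
        rcases reflTransGen_iff_eq_or_transGen.1 hc with rfl | ht
        · exact absurd rfl (Ne.symm hne)
        · exact ht
      exact between_not_mem hwf ht (heq ▸ anc_lastBefore hwf S x2) hx2.1
    · have ht : TransGen u.Step x2 x1 := by
        rcases reflTransGen_iff_eq_or_transGen.1 hc with rfl | ht
        · exact absurd rfl hne
        · exact ht
      exact between_not_mem hwf ht (heq ▸ anc_lastBefore hwf S x1) hx1.1
  · -- surjective
    intro y hy
    simp only [Finset.mem_filter] at hy
    obtain ⟨hyV, hanc, hcol, w, hpw, hQw⟩ := hy
    have hwS : w ∈ S := hQ w hQw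
    -- pick the S-element weakly below y on the chain, closest to y
    have hTne : (S.filter fun z => u.Anc v z ∧ u.Anc z y).Nonempty :=
      ⟨v, Finset.mem_filter.2 ⟨hv, ReflTransGen.refl, hanc⟩⟩
    obtain ⟨x, hxT, hxmin⟩ :=
      Finset.exists_min_image (S.filter fun z => u.Anc v z ∧ u.Anc z y) rk hTne
    rw [Finset.mem_filter] at hxT
    obtain ⟨hxS, hvx, hxy⟩ := hxT
    have hlb : u.lastBefore S x = y := by
      apply LBspec_unique hwf (lastBefore_spec hwf S x)
      refine ⟨hxy, ?_, ?_⟩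
      · intro z w' hxz hzy hzw' hw'S
        have hvw' : u.Anc v w' := (hvx.trans hxz).tail hzw'
        have hw'y : u.Anc w' y := by
          obtain ⟨d, hd1, hd2⟩ := TransGen.head'_iff.1 hzy
          exact (step_det hzw' hd1) ▸ hd2
        have hw'T : w' ∈ S.filter fun z => u.Anc v z ∧ u.Anc z y :=
          Finset.mem_filter.2 ⟨hw'S, hvw', hw'y⟩
        have h1 : rk x ≤ rk w' := hxmin w' hw'T
        have h2 : rk w' < rk z := hrk _ _ hzw'
        have h3 : rk z ≤ rk x := anc_rk_le hrk hxz
        omega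
      · intro w' hw'
        exact (step_det hw' hpw) ▸ hwS
    refine ⟨x, Finset.mem_filter.2 ⟨hxS, hvx, ?_, w, ?_, hQw⟩, hlb⟩
    · rw [hlb]; exact hcol
    · rw [nearestAnc_eq_parent_lastBefore hwf, hlb]; exact hpw

/-- additivity of `epar` over a disjunction of disjoint predicates. -/
theorem epar_or {Q1 Q2 : ℕ → Prop} (hdisj : ∀ w, ¬ (Q1 w ∧ Q2 w))
    {j : Fin n} {v : ℕ} :
    u.epar (fun w => Q1 w ∨ Q2 w) j v = u.epar Q1 j v + u.epar Q2 j v := by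
  unfold epar
  rw [← Finset.card_union_of_disjoint]
  · congr 1
    ext x
    simp only [Finset.mem_union, Finset.mem_filter]
    constructor
    · rintro ⟨h1, h2, h3, w, h4, h5 | h5⟩
      · exact Or.inl ⟨h1, h2, h3, w, h4, h5⟩
      · exact Or.inr ⟨h1, h2, h3, w, h4, h5⟩
    · rintro (⟨h1, h2, h3, w, h4, h5⟩ | ⟨h1, h2, h3, w, h4, h5⟩)
      · exact ⟨h1, h2, h3, w, h4, Or.inl h5⟩
      · exact ⟨h1, h2, h3, w, h4, Or.inr h5⟩
  · rw [Finset.disjoint_left]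
    rintro x hx1 hx2
    rw [Finset.mem_filter] at hx1 hx2
    obtain ⟨-, -, -, w1, hw1, hq1⟩ := hx1
    obtain ⟨-, -, -, w2, hw2, hq2⟩ := hx2
    rw [hw1] at hw2
    exact hdisj w1 ⟨hq1, Option.some.inj hw2 ▸ hq2⟩

theorem epar_congr {Q Q' : ℕ → Prop} (h : ∀ w, Q w ↔ Q' w) {j : Fin n} {v : ℕ} :
    u.epar Q j v = u.epar Q' j v := by
  unfold epar
  congr 1
  ext x
  simp only [Finset.mem_filter, h]

/-- on a chain inside an ancestor-closed set, only the values of `Q` on the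
set matter. -/
theorem epar_congr_ancClosed {C : Finset ℕ} (hC : u.AncClosed C)
    {Q Q' : ℕ → Prop} (h : ∀ w ∈ C, (Q w ↔ Q' w)) {j : Fin n} {v : ℕ}
    (hv : v ∈ C) :
    u.epar Q j v = u.epar Q' j v := by
  unfold epar
  congr 1
  ext x
  simp only [Finset.mem_filter]
  constructor
  · rintro ⟨hxV, h1, h2, w, h3, h4⟩
    have hw : w ∈ C := hC v hv w (TransGen.tail' h1 h3)
    exact ⟨hxV, h1, h2, w, h3, (h w hw).1 h4⟩
  · rintro ⟨hxV, h1, h2, w, h3, h4⟩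
    have hw : w ∈ C := hC v hv w (TransGen.tail' h1 h3)
    exact ⟨hxV, h1, h2, w, h3, (h w hw).2 h4⟩

/-- `pcount` at the top level, in `epar` form. -/
theorem pcount_eq_epar (hwf : u.WF) {T s : Finset ℕ} (hT : T ⊆ u.verts)
    {j : Fin n} {v : ℕ} (hv : v ∈ T) :
    u.pcount T s j v = u.epar (fun w => w ∈ T ∧ w ∉ s) j v := by
  rw [pcount_eq_ecount hwf]
  exact ecount_eq_epar hwf hT (fun w hw => hw.1) hv

/-- `pcount` is unchanged under restriction. -/
theorem restrict_pcount (hwf : u.WF) {S : Finset ℕ} (hS : S ⊆ u.verts)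
    {s : Finset ℕ} {j : Fin n} {v : ℕ} (hv : v ∈ S) :
    (u.restrict S).pcount S s j v = u.pcount S s j v := by
  unfold pcount
  congr 1
  ext x
  simp only [Finset.mem_filter]
  refine and_congr_right fun hx => ?_
  have hx' : x ∈ S ∩ u.verts := Finset.mem_inter.2 ⟨hx, hS hx⟩
  have hv' : v ∈ S ∩ u.verts := Finset.mem_inter.2 ⟨hv, hS hv⟩
  rw [restrict_anc_iff' hwf hv' hx, restrict_lastBefore_self hwf,
    restrict_nearestAnc hwf (le_refl S) hx']
  show _ ∧ (u.restrict S).color x = j ∧ _ ↔ _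
  show _ ∧ u.color (u.lastBefore S x) = j ∧ _ ↔ _
  rfl


end PForest

section Coef

open PForest Relation

variable {K : Type*} [Field K] {n : ℕ} {u : PForest n} (q1 q2 : Fin n → K)

theorem prodq_mul (q : Fin n → K) (a b : Fin n → ℕ) :
    (∏ j : Fin n, q j ^ a j) * ∏ j : Fin n, q j ^ b j =
      ∏ j : Fin n, q j ^ (a j + b j) := by
  rw [← Finset.prod_mul_distrib]
  exact Finset.prod_congr rfl fun j _ => (pow_add _ _ _).symm

theorem qcoef_eq_epar (hwf : u.WF) {T s : Finset ℕ} (hT : T ⊆ u.verts)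
    (hs : s ⊆ T) :
    qcoef K q1 q2 u T s =
      (∏ j : Fin n, q1 j ^ ∑ v ∈ s, u.epar (fun w => w ∈ T ∧ w ∉ s) j v) *
        ∏ j : Fin n, q2 j ^ ∑ v ∈ T \ s, u.epar (fun w => w ∈ s) j v := by
  unfold qcoef
  congr 1
  · refine Finset.prod_congr rfl fun j _ => ?_
    congr 1
    refine Finset.sum_congr rfl fun v hv => ?_
    exact pcount_eq_epar hwf hT (hs hv)
  · refine Finset.prod_congr rfl fun j _ => ?_
    congr 1
    refine Finset.sum_congr rfl fun v hv => ?_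
    rw [pcount_eq_epar hwf hT (Finset.mem_sdiff.1 hv).1]
    apply epar_congr
    intro w
    simp only [Finset.mem_sdiff]
    constructor
    · rintro ⟨h1, h2⟩
      by_contra hws
      exact h2 ⟨h1, hws⟩
    · intro hws
      exact ⟨hs hws, fun h => h.2 hws⟩

/-- the coassociativity identity for the `q`-coefficients. -/
theorem qcoef_coassoc (hwf : u.WF) {A S : Finset ℕ} (hA : A ⊆ S)
    (hS : S ⊆ u.verts) :
    qcoef K q1 q2 u u.verts S * qcoef K q1 q2 u S A =
      qcoef K q1 q2 u u.verts A * qcoef K q1 q2 u (u.verts \ A) (S \ A) := by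
  have hAV : A ⊆ u.verts := hA.trans hS
  have hSA : S \ A ⊆ u.verts \ A := Finset.sdiff_subset_sdiff hS (le_refl A)
  have hsd : (u.verts \ A) \ (S \ A) = u.verts \ S := by
    ext w
    simp only [Finset.mem_sdiff]
    constructor
    · rintro ⟨⟨h1, h2⟩, h3⟩
      exact ⟨h1, fun hw => h3 ⟨hw, h2⟩⟩
    · rintro ⟨h1, h2⟩
      exact ⟨⟨h1, fun hw => h2 (hA hw)⟩, fun hw => h2 hw.1⟩
  rw [qcoef_eq_epar q1 q2 hwf (le_refl u.verts) hS,
    qcoef_eq_epar q1 q2 hwf hS hA,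
    qcoef_eq_epar q1 q2 hwf (le_refl u.verts) hAV,
    qcoef_eq_epar q1 q2 hwf Finset.sdiff_subset hSA]
  conv_lhs => rw [mul_mul_mul_comm]
  conv_rhs => rw [mul_mul_mul_comm]
  rw [prodq_mul, prodq_mul, prodq_mul, prodq_mul]
  congr 1
  · refine Finset.prod_congr rfl fun j _ => ?_
    congr 1
    have split : ∀ v, u.epar (fun w => w ∈ u.verts ∧ w ∉ A) j v =
        u.epar (fun w => w ∈ u.verts ∧ w ∉ S) j v +
          u.epar (fun w => w ∈ S ∧ w ∉ A) j v := by
      intro v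
      rw [← epar_or (fun w hw => hw.1.2 hw.2.1)]
      apply epar_congr
      intro w
      constructor
      · rintro ⟨h1, h2⟩
        by_cases hw : w ∈ S
        · exact Or.inr ⟨hw, h2⟩
        · exact Or.inl ⟨h1, hw⟩
      · rintro (⟨h1, h2⟩ | ⟨h1, h2⟩)
        · exact ⟨h1, fun hw => h2 (hA hw)⟩
        · exact ⟨hS h1, h2⟩
    have congr2 : ∀ v, u.epar (fun w => w ∈ u.verts \ A ∧ w ∉ S \ A) j v =
        u.epar (fun w => w ∈ u.verts ∧ w ∉ S) j v := by
      intro v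
      apply epar_congr
      intro w
      simp only [Finset.mem_sdiff]
      constructor
      · rintro ⟨⟨h1, h2⟩, h3⟩
        exact ⟨h1, fun hw => h3 ⟨hw, h2⟩⟩
      · rintro ⟨h1, h2⟩
        exact ⟨⟨h1, fun hw => h2 (hA hw)⟩, fun hw => h2 hw.1⟩
    have h1 : ∑ v ∈ A, u.epar (fun w => w ∈ u.verts ∧ w ∉ A) j v
        = ∑ v ∈ A, (u.epar (fun w => w ∈ u.verts ∧ w ∉ S) j v
            + u.epar (fun w => w ∈ S ∧ w ∉ A) j v) :=
      Finset.sum_congr rfl fun v _ => split v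
    have h2 : ∑ v ∈ S \ A, u.epar (fun w => w ∈ u.verts \ A ∧ w ∉ S \ A) j v
        = ∑ v ∈ S \ A, u.epar (fun w => w ∈ u.verts ∧ w ∉ S) j v :=
      Finset.sum_congr rfl fun v _ => congr2 v
    rw [h1, h2, Finset.sum_add_distrib]
    have hsum : ∑ v ∈ S \ A, u.epar (fun w => w ∈ u.verts ∧ w ∉ S) j v +
        ∑ v ∈ A, u.epar (fun w => w ∈ u.verts ∧ w ∉ S) j v =
        ∑ v ∈ S, u.epar (fun w => w ∈ u.verts ∧ w ∉ S) j v :=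
      Finset.sum_sdiff hA
    omega
  · refine Finset.prod_congr rfl fun j _ => ?_
    congr 1
    rw [hsd]
    have split : ∀ v, u.epar (fun w => w ∈ S) j v =
        u.epar (fun w => w ∈ A) j v + u.epar (fun w => w ∈ S \ A) j v := by
      intro v
      rw [← epar_or (fun w hw => (Finset.mem_sdiff.1 hw.2).2 hw.1)]
      apply epar_congr
      intro w
      simp only [Finset.mem_sdiff]
      constructor
      · intro h1
        by_cases hw : w ∈ A
        · exact Or.inl hw
        · exact Or.inr ⟨h1, hw⟩
      · rintro (h | ⟨h1, h2⟩)
        · exact hA h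
        · exact h1
    have hs2 : ∑ v ∈ u.verts \ A, u.epar (fun w => w ∈ A) j v =
        ∑ v ∈ (u.verts \ A) \ (S \ A), u.epar (fun w => w ∈ A) j v +
          ∑ v ∈ S \ A, u.epar (fun w => w ∈ A) j v :=
      (Finset.sum_sdiff hSA).symm
    rw [hsd] at hs2
    have h1 : ∑ v ∈ u.verts \ S, u.epar (fun w => w ∈ S) j v
        = ∑ v ∈ u.verts \ S, (u.epar (fun w => w ∈ A) j v
            + u.epar (fun w => w ∈ S \ A) j v) :=
      Finset.sum_congr rfl fun v _ => split v
    rw [h1, Finset.sum_add_distrib]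
    omega

/-- the multiplicativity identity for the `q`-coefficients over an
ancestor-closed splitting of the vertex set. -/
theorem qcoef_mult (hwf : u.WF) {C A B : Finset ℕ} (hCV : C ⊆ u.verts)
    (hC : u.AncClosed C) (hC' : u.AncClosed (u.verts \ C))
    (hA : A ⊆ C) (hB : B ⊆ u.verts \ C) :
    qcoef K q1 q2 u C A * qcoef K q1 q2 u (u.verts \ C) B =
      qcoef K q1 q2 u u.verts (A ∪ B) := by
  have hAB : A ∪ B ⊆ u.verts := Finset.union_subset (hA.trans hCV)
    (hB.trans Finset.sdiff_subset)
  have hdisjAB : ∀ w, w ∈ A → w ∈ B → False := fun w hwA hwB =>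
    (Finset.mem_sdiff.1 (hB hwB)).2 (hA hwA)
  rw [qcoef_eq_epar q1 q2 hwf hCV hA,
    qcoef_eq_epar q1 q2 hwf Finset.sdiff_subset hB,
    qcoef_eq_epar q1 q2 hwf (le_refl u.verts) hAB]
  rw [mul_mul_mul_comm, prodq_mul, prodq_mul]
  congr 1
  · refine Finset.prod_congr rfl fun j _ => ?_
    congr 1
    rw [Finset.sum_union (Finset.disjoint_left.2
      fun w h1 h2 => hdisjAB w h1 h2)]
    congr 1
    · refine Finset.sum_congr rfl fun v hv => ?_
      refine epar_congr_ancClosed hC (fun w hw => ?_) (hA hv)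
      constructor
      · rintro ⟨h1, h2⟩
        exact ⟨hCV h1, fun h' => (Finset.mem_union.1 h').elim h2
          (fun hB' => (Finset.mem_sdiff.1 (hB hB')).2 hw)⟩
      · rintro ⟨h1, h2⟩
        exact ⟨hw, fun hA' => h2 (Finset.mem_union_left _ hA')⟩
    · refine Finset.sum_congr rfl fun v hv => ?_
      refine epar_congr_ancClosed hC' (fun w hw => ?_) (hB hv)
      constructor
      · rintro ⟨h1, h2⟩
        exact ⟨(Finset.mem_sdiff.1 hw).1, fun h' => (Finset.mem_union.1 h').elim
          (fun hA' => (Finset.mem_sdiff.1 hw).2 (hA hA')) h2⟩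
      · rintro ⟨h1, h2⟩
        exact ⟨hw, fun hB' => h2 (Finset.mem_union_right _ hB')⟩
  · refine Finset.prod_congr rfl fun j _ => ?_
    congr 1
    have hsplit : u.verts \ (A ∪ B) = (C \ A) ∪ ((u.verts \ C) \ B) := by
      ext w
      simp only [Finset.mem_sdiff, Finset.mem_union]
      constructor
      · rintro ⟨h1, h2⟩
        by_cases hw : w ∈ C
        · exact Or.inl ⟨hw, fun hA' => h2 (Or.inl hA')⟩
        · exact Or.inr ⟨⟨h1, hw⟩, fun hB' => h2 (Or.inr hB')⟩
      · rintro (⟨h1, h2⟩ | ⟨⟨h1, h3⟩, h2⟩)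
        · exact ⟨hCV h1, fun h' => h'.elim h2
            (fun hB' => (Finset.mem_sdiff.1 (hB hB')).2 h1)⟩
        · exact ⟨h1, fun h' => h'.elim (fun hA' => h3 (hA hA')) h2⟩
    rw [hsplit, Finset.sum_union (Finset.disjoint_left.2 fun w h1 h2 =>
      (Finset.mem_sdiff.1 (Finset.mem_sdiff.1 h2).1).2 (Finset.mem_sdiff.1 h1).1)]
    congr 1
    · refine Finset.sum_congr rfl fun v hv => ?_
      refine epar_congr_ancClosed hC (fun w hw => ?_)
        ((Finset.mem_sdiff.1 hv).1)
      simp only [Finset.mem_union]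
      constructor
      · exact Or.inl
      · rintro (h | h)
        · exact h
        · exact ((Finset.mem_sdiff.1 (hB h)).2 hw).elim
    · refine Finset.sum_congr rfl fun v hv => ?_
      refine epar_congr_ancClosed hC' (fun w hw => ?_)
        ((Finset.mem_sdiff.1 hv).1)
      simp only [Finset.mem_union]
      constructor
      · exact Or.inr
      · rintro (h | h)
        · exact ((Finset.mem_sdiff.1 hw).2 (hA h)).elim
        · exact h

end Coef

section Mono

open PForest Relation

variable {n : ℕ} {u : PForest n}

namespace PForest

/-- identity-based isomorphism criterion. -/
theorem piso_of_agree {s t : PForest n} (hv : s.verts = t.verts)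
    (hp : ∀ v ∈ s.verts, s.parent v = t.parent v)
    (hc : ∀ v ∈ s.verts, (s.parent v).isSome → t.color v = s.color v)
    (hscl : ∀ v w, s.parent v = some w → v ∈ s.verts) : s.PIso t := by
  refine ⟨⟨fun x => ⟨x.1, hv ▸ x.2⟩, fun y => ⟨y.1, hv.symm ▸ y.2⟩,
    fun x => Subtype.ext rfl, fun y => Subtype.ext rfl⟩, ?_, ?_⟩
  · intro v w
    show s.parent v.1 = some w.1 ↔ t.parent v.1 = some w.1
    rw [hp v.1 v.2]
  · intro v hsome
    exact hc v.1 v.2 hsome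

theorem restrict_parent_mem {S : Finset ℕ} {v w : ℕ}
    (h : (u.restrict S).parent v = some w) : v ∈ S ∩ u.verts := by
  by_contra hv
  have : (u.restrict S).parent v = none := by
    show (if v ∈ S ∩ u.verts then u.nearestAnc S v else none) = none
    rw [if_neg hv]
  rw [this] at h
  cases h

/-- a doubly-restricted forest is isomorphic to the restriction to the
smaller set. -/
theorem restrict_restrict_piso (hwf : u.WF) {S D : Finset ℕ} (hDS : D ⊆ S) :
    ((u.restrict S).restrict D).PIso (u.restrict D) := by
  have hverts : ((u.restrict S).restrict D).verts = (u.restrict D).verts := by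
    show D ∩ (S ∩ u.verts) = D ∩ u.verts
    ext x
    simp only [Finset.mem_inter]
    exact ⟨fun h => ⟨h.1, h.2.2⟩, fun h => ⟨h.1, hDS h.1, h.2⟩⟩
  apply piso_of_agree hverts
  · intro v hv
    have hv1 : v ∈ D ∩ (S ∩ u.verts) := hv
    have hvS : v ∈ S ∩ u.verts := (Finset.mem_inter.1 hv1).2
    have hvD : v ∈ D ∩ u.verts := by
      rw [hverts] at hv; exact hv
    show (if v ∈ D ∩ (S ∩ u.verts) then (u.restrict S).nearestAnc D v else none)
      = (if v ∈ D ∩ u.verts then u.nearestAnc D v else none)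
    rw [if_pos hv1, if_pos hvD]
    exact restrict_nearestAnc hwf hDS hvS
  · intro v hv _
    have hv1 : v ∈ D ∩ (S ∩ u.verts) := hv
    have hvS : v ∈ S ∩ u.verts := (Finset.mem_inter.1 hv1).2
    show u.color (u.lastBefore D v)
      = (u.restrict S).color ((u.restrict S).lastBefore D v)
    show u.color (u.lastBefore D v)
      = u.color (u.lastBefore S ((u.restrict S).lastBefore D v))
    rw [lastBefore_restrict_comp hwf hDS hvS]
  · intro v w h
    exact restrict_parent_mem h

/-- restricting to the full vertex set yields an isomorphic forest. -/
theorem restrict_verts_piso (hwf : u.WF) : (u.restrict u.verts).PIso u := by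
  have hverts : (u.restrict u.verts).verts = u.verts := by
    show u.verts ∩ u.verts = u.verts
    exact Finset.inter_self _
  apply piso_of_agree hverts
  · intro v hv
    have hv1 : v ∈ u.verts ∩ u.verts := hv
    show (if v ∈ u.verts ∩ u.verts then u.nearestAnc u.verts v else none)
      = u.parent v
    rw [if_pos hv1]
    exact nearestAnc_verts hwf v
  · intro v hv _
    show u.color v = u.color (u.lastBefore u.verts v)
    rw [lastBefore_verts hwf]
  · intro v w h
    exact restrict_parent_mem h

/-- `sroots` is unchanged under restriction. -/
theorem sroots_restrict (hwf : u.WF) {S A : Finset ℕ} (hS : S ⊆ u.verts)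
    (hA : A ⊆ S) : (u.restrict S).sroots A = u.sroots A := by
  ext r
  simp only [mem_sroots]
  refine and_congr_right fun hr => ?_
  have hr' : r ∈ S ∩ u.verts := Finset.mem_inter.2 ⟨hA hr, hS (hA hr)⟩
  constructor
  · intro h w hw hanc
    exact h w hw ((restrict_anc_iff' hwf hr' (hA hw)).2 hanc)
  · intro h w hw hanc
    exact h w hw ((restrict_anc_iff' hwf hr' (hA hw)).1 hanc)

/-- `compSet` is unchanged under restriction. -/
theorem compSet_restrict (hwf : u.WF) {S A : Finset ℕ} (hS : S ⊆ u.verts)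
    (hA : A ⊆ S) {r : ℕ} (hrA : r ∈ A) :
    (u.restrict S).compSet A r = u.compSet A r := by
  ext x
  simp only [mem_compSet]
  refine and_congr_right fun hx => ?_
  have hx' : x ∈ S ∩ u.verts := Finset.mem_inter.2 ⟨hA hx, hS (hA hx)⟩
  exact restrict_anc_iff' hwf hx' (hA hrA)

end PForest

variable (K : Type*) [Field K] [NeZero n]

theorem mkClass_eq_of_piso {t1 t2 : PForest n} (h1 : t1.WF ∧ t1.IsTree)
    (h2 : t2.WF ∧ t2.IsTree) (h : t1.PIso t2) : mkClass t1 = mkClass t2 := by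
  unfold mkClass
  exact (dif_pos h1).trans ((Quot.sound (r := fun a b : TreeObj n => PForest.PIso a.1 b.1)
    (a := ⟨t1, h1⟩) (b := ⟨t2, h2⟩) h).trans (Eq.symm (dif_pos h2)))

/-- the forest monomial only depends on the restricted forest. -/
theorem forestMonomial_restrict (hwf : u.WF) {S A : Finset ℕ}
    (hS : S ⊆ u.verts) (hA : A ⊆ S) :
    forestMonomial K (u.restrict S) A = forestMonomial K u A := by
  unfold forestMonomial
  rw [PForest.sroots_restrict hwf hS hA]
  refine Finset.prod_congr rfl fun r hr => ?_
  have hrA : r ∈ A := (PForest.mem_sroots.1 hr).1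
  rw [PForest.compSet_restrict hwf hS hA hrA]
  congr 1
  have hDA : u.compSet A r ⊆ A := fun x hx => (PForest.mem_compSet.1 hx).1
  have hDS : u.compSet A r ⊆ S := hDA.trans hA
  have hr' : r ∈ u.sroots A := hr
  refine mkClass_eq_of_piso ?_ ?_ (PForest.restrict_restrict_piso hwf hDS)
  · refine ⟨(hwf.restrict S).restrict _, ?_⟩
    have : r ∈ (u.restrict S).sroots A := by
      rw [PForest.sroots_restrict hwf hS hA]; exact hr'
    have := PForest.restrict_compSet_isTree (hwf.restrict S)
      (by show A ⊆ S ∩ u.verts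
          exact fun x hx => Finset.mem_inter.2 ⟨hA hx, hS (hA hx)⟩) this
    rwa [PForest.compSet_restrict hwf hS hA hrA] at this
  · exact ⟨hwf.restrict _,
      PForest.restrict_compSet_isTree hwf (hA.trans hS) hr'⟩

/-- multiplicativity of the forest monomial over an ancestor-closed
splitting. -/
theorem forestMonomial_union (hwf : u.WF) {C A B : Finset ℕ}
    (hCV : C ⊆ u.verts) (hC : u.AncClosed C)
    (hC' : u.AncClosed (u.verts \ C)) (hA : A ⊆ C) (hB : B ⊆ u.verts \ C) :
    forestMonomial K u (A ∪ B) = forestMonomial K u A * forestMonomial K u B := by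
  have hdisjAB : ∀ w, w ∈ A → w ∈ B → False := fun w hwA hwB =>
    (Finset.mem_sdiff.1 (hB hwB)).2 (hA hwA)
  have hsroots : u.sroots (A ∪ B) = u.sroots A ∪ u.sroots B := by
    ext r
    simp only [PForest.mem_sroots, Finset.mem_union]
    constructor
    · rintro ⟨hr | hr, h⟩
      · exact Or.inl ⟨hr, fun w hw hanc => h w (Or.inl hw) hanc⟩
      · exact Or.inr ⟨hr, fun w hw hanc => h w (Or.inr hw) hanc⟩
    · rintro (⟨hr, h⟩ | ⟨hr, h⟩)
      · refine ⟨Or.inl hr, fun w hw hanc => ?_⟩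
        rcases hw with hw | hw
        · exact h w hw hanc
        · rcases reflTransGen_iff_eq_or_transGen.1 hanc with rfl | ht
          · rfl
          · exact absurd (hC r (hA hr) w ht)
              (fun hc => (Finset.mem_sdiff.1 (hB hw)).2 hc)
      · refine ⟨Or.inr hr, fun w hw hanc => ?_⟩
        rcases hw with hw | hw
        · rcases reflTransGen_iff_eq_or_transGen.1 hanc with rfl | ht
          · rfl
          · exact absurd (hC' r (hB hr) w ht)
              (fun hc => (Finset.mem_sdiff.1 hc).2 (hA hw))
        · exact h w hw hanc
  have hcompA : ∀ r ∈ u.sroots A, u.compSet (A ∪ B) r = u.compSet A r := by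
    intro r hr
    ext x
    simp only [PForest.mem_compSet, Finset.mem_union]
    constructor
    · rintro ⟨hx | hx, hanc⟩
      · exact ⟨hx, hanc⟩
      · exfalso
        rcases reflTransGen_iff_eq_or_transGen.1 hanc with rfl | ht
        · exact hdisjAB r (PForest.mem_sroots.1 hr).1 hx
        · exact (Finset.mem_sdiff.1 (hC' x (hB hx) r ht)).2
            (hA (PForest.mem_sroots.1 hr).1)
    · rintro ⟨hx, hanc⟩
      exact ⟨Or.inl hx, hanc⟩
  have hcompB : ∀ r ∈ u.sroots B, u.compSet (A ∪ B) r = u.compSet B r := by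
    intro r hr
    ext x
    simp only [PForest.mem_compSet, Finset.mem_union]
    constructor
    · rintro ⟨hx | hx, hanc⟩
      · exfalso
        rcases reflTransGen_iff_eq_or_transGen.1 hanc with rfl | ht
        · exact hdisjAB r hx (PForest.mem_sroots.1 hr).1
        · exact (Finset.mem_sdiff.1 (hB (PForest.mem_sroots.1 hr).1)).2
            (hC x (hA hx) r ht)
      · exact ⟨hx, hanc⟩
    · rintro ⟨hx, hanc⟩
      exact ⟨Or.inr hx, hanc⟩
  unfold forestMonomial
  rw [hsroots, Finset.prod_union (Finset.disjoint_left.2 fun r h1 h2 =>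
    hdisjAB r (PForest.mem_sroots.1 h1).1 (PForest.mem_sroots.1 h2).1)]
  congr 1
  · exact Finset.prod_congr rfl fun r hr => by rw [hcompA r hr]
  · exact Finset.prod_congr rfl fun r hr => by rw [hcompB r hr]

/-- the monomial of a whole tree is the variable of its class. -/
theorem forestMonomial_tree {t : PForest n} (h : t.WF ∧ t.IsTree) :
    forestMonomial K t t.verts = MvPolynomial.X (Quot.mk _ (⟨t, h⟩ : TreeObj n)) := by
  obtain ⟨hwf, htree⟩ := h
  obtain ⟨r0, hr0⟩ := Finset.card_eq_one.1 htree
  have hsr : t.sroots t.verts = {r0} := by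
    rw [PForest.sroots_verts hwf, hr0]
  have hr0mem : r0 ∈ t.verts.filter fun v => t.parent v = none := by
    rw [hr0]; exact Finset.mem_singleton_self r0
  rw [Finset.mem_filter] at hr0mem
  have hcomp : t.compSet t.verts r0 = t.verts := by
    ext x
    simp only [PForest.mem_compSet]
    refine ⟨fun h => h.1, fun hx => ⟨hx, ?_⟩⟩
    obtain ⟨r, hanc, hrnone⟩ := PForest.exists_root hwf (v := x)
    have : r ∈ t.verts.filter fun v => t.parent v = none :=
      Finset.mem_filter.2 ⟨hwf.anc_mem hanc hx, hrnone⟩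
    rw [hr0] at this
    rw [Finset.mem_singleton.1 this] at hanc
    exact hanc
  unfold forestMonomial
  rw [hsr, Finset.prod_singleton, hcomp]
  congr 1
  have hr0sroots : r0 ∈ t.sroots t.verts := by
    rw [hsr]; exact Finset.mem_singleton_self r0
  have htree' : (t.restrict t.verts).IsTree := by
    have := PForest.restrict_compSet_isTree hwf (le_refl t.verts) hr0sroots
    rwa [hcomp] at this
  have := mkClass_eq_of_piso ⟨hwf.restrict _, htree'⟩ ⟨hwf, htree⟩
    (PForest.restrict_verts_piso hwf)
  rw [this]
  unfold mkClass
  exact dif_pos ⟨hwf, htree⟩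

end Mono

section Inv

open PForest Relation

variable {n : ℕ}

namespace PForest

/-- function form of an isomorphism of forests. -/
structure FIso (s t : PForest n) (f g : ℕ → ℕ) : Prop where
  mapsto : ∀ v ∈ s.verts, f v ∈ t.verts
  mapsto' : ∀ w ∈ t.verts, g w ∈ s.verts
  gf : ∀ v ∈ s.verts, g (f v) = v
  fg : ∀ w ∈ t.verts, f (g w) = w
  step : ∀ v w, s.Step v w → t.Step (f v) (f w)
  step' : ∀ v w, t.Step v w → s.Step (g v) (g w)
  colr : ∀ v ∈ s.verts, (s.parent v).isSome → t.color (f v) = s.color v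

variable {s t : PForest n} {f g : ℕ → ℕ}

theorem FIso.symm (hs : s.WF) (ht : t.WF) (h : FIso s t f g) :
    FIso t s g f := by
  refine ⟨h.mapsto', h.mapsto, h.fg, h.gf, h.step', h.step, ?_⟩
  intro w hw hsome
  obtain ⟨y, hy⟩ := Option.isSome_iff_exists.1 hsome
  have hstep : t.Step w y := hy
  have hstep' : s.Step (g w) (g y) := h.step' w y hstep
  have hgw : g w ∈ s.verts := h.mapsto' w hw
  have := h.colr (g w) hgw (Option.isSome_iff_exists.2 ⟨g y, hstep'⟩)
  rw [h.fg w hw] at this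
  exact this.symm

theorem PIso.exists_fiso (hp : s.PIso t) (hs : s.WF) (ht : t.WF) :
    ∃ f g, FIso s t f g := by
  obtain ⟨e, he1, he2⟩ := hp
  refine ⟨fun v => if h : v ∈ s.verts then (e ⟨v, h⟩ : ℕ) else v,
    fun w => if h : w ∈ t.verts then (e.symm ⟨w, h⟩ : ℕ) else w,
    ?_, ?_, ?_, ?_, ?_, ?_, ?_⟩
  · intro v hv
    simp only [dif_pos hv]
    exact (e ⟨v, hv⟩).2
  · intro w hw
    simp only [dif_pos hw]
    exact (e.symm ⟨w, hw⟩).2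
  · intro v hv
    simp only [dif_pos hv, dif_pos (e ⟨v, hv⟩).2]
    have h1 : (⟨(e ⟨v, hv⟩ : ℕ), (e ⟨v, hv⟩).2⟩ : {x // x ∈ t.verts})
        = e ⟨v, hv⟩ := Subtype.ext rfl
    rw [h1, e.symm_apply_apply]
  · intro w hw
    simp only [dif_pos hw, dif_pos (e.symm ⟨w, hw⟩).2]
    have h1 : (⟨(e.symm ⟨w, hw⟩ : ℕ), (e.symm ⟨w, hw⟩).2⟩ : {x // x ∈ s.verts})
        = e.symm ⟨w, hw⟩ := Subtype.ext rfl
    rw [h1, e.apply_symm_apply]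
  · intro v w hvw
    have hv := (hs.1 v w hvw).1
    have hw := (hs.1 v w hvw).2
    show t.parent _ = some _
    simp only [dif_pos hv, dif_pos hw]
    exact (he1 ⟨v, hv⟩ ⟨w, hw⟩).1 hvw
  · intro v w hvw
    have hv := (ht.1 v w hvw).1
    have hw := (ht.1 v w hvw).2
    show s.parent _ = some _
    simp only [dif_pos hv, dif_pos hw]
    refine (he1 (e.symm ⟨v, hv⟩) (e.symm ⟨w, hw⟩)).2 ?_
    have h1 : ((e (e.symm ⟨v, hv⟩)) : ℕ) = v := by rw [e.apply_symm_apply]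
    have h2 : ((e (e.symm ⟨w, hw⟩)) : ℕ) = w := by rw [e.apply_symm_apply]
    rw [h1, h2]
    exact hvw
  · intro v hv hsome
    simp only [dif_pos hv]
    exact he2 ⟨v, hv⟩ hsome

theorem FIso.transGen (h : FIso s t f g) {v w : ℕ}
    (hvw : TransGen s.Step v w) : TransGen t.Step (f v) (f w) := by
  induction hvw with
  | single h1 => exact TransGen.single (h.step _ _ h1)
  | tail _ h2 ih => exact ih.tail (h.step _ _ h2)

theorem FIso.anc (h : FIso s t f g) {v w : ℕ} (hvw : s.Anc v w) :
    t.Anc (f v) (f w) := by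
  induction hvw with
  | refl => exact ReflTransGen.refl
  | tail _ h2 ih => exact ih.tail (h.step _ _ h2)

theorem FIso.mem_image (h : FIso s t f g) {S : Finset ℕ} (hS : S ⊆ s.verts)
    {x : ℕ} (hx : x ∈ t.verts) : x ∈ S.image f ↔ g x ∈ S := by
  constructor
  · intro hmem
    obtain ⟨v, hv, rfl⟩ := Finset.mem_image.1 hmem
    rw [h.gf v (hS hv)]
    exact hv
  · intro hgx
    have hfg : f (g x) = x := h.fg x hx
    rw [← hfg]
    exact Finset.mem_image_of_mem f hgx

theorem FIso.mem_image' (h : FIso s t f g) {S : Finset ℕ} (hS : S ⊆ s.verts)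
    {v : ℕ} (hv : v ∈ s.verts) : f v ∈ S.image f ↔ v ∈ S := by
  constructor
  · intro hmem
    obtain ⟨v', hv', heq⟩ := Finset.mem_image.1 hmem
    have : v' = v := by rw [← h.gf v' (hS hv'), heq, h.gf v hv]
    rwa [← this]
  · exact Finset.mem_image_of_mem f

theorem FIso.verts_image (h : FIso s t f g) : s.verts.image f = t.verts := by
  ext x
  constructor
  · intro hmem
    obtain ⟨v, hv, rfl⟩ := Finset.mem_image.1 hmem
    exact h.mapsto v hv
  · intro hx
    rw [← h.fg x hx]
    exact Finset.mem_image_of_mem f (h.mapsto' x hx)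

theorem FIso.image_sdiff (h : FIso s t f g) {S A : Finset ℕ}
    (hS : S ⊆ s.verts) (hA : A ⊆ s.verts) :
    (S \ A).image f = S.image f \ A.image f := by
  ext x
  simp only [Finset.mem_sdiff, Finset.mem_image]
  constructor
  · rintro ⟨v, hv, rfl⟩
    refine ⟨⟨v, hv.1, rfl⟩, ?_⟩
    rintro ⟨v', hv', heq⟩
    have : v' = v := by rw [← h.gf v' (hA hv'), heq, h.gf v (hS hv.1)]
    exact hv.2 (this ▸ hv')
  · rintro ⟨⟨v, hv, rfl⟩, hnA⟩
    exact ⟨v, ⟨hv, fun hvA => hnA ⟨v, hvA, rfl⟩⟩, rfl⟩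

theorem FIso.nearestAnc_eq (hs : s.WF) (ht : t.WF) (h : FIso s t f g)
    {S : Finset ℕ} (hS : S ⊆ s.verts) {v : ℕ} (hv : v ∈ s.verts) :
    t.nearestAnc (S.image f) (f v) = Option.map f (s.nearestAnc S v) := by
  have hsymm := h.symm hs ht
  cases hna : s.nearestAnc S v with
  | none =>
    show _ = none
    rw [nearestAnc_eq_none_iff ht]
    intro x hx hxmem
    have hxv : x ∈ t.verts := ht.transGen_mem hx
    have hgx : TransGen s.Step (g (f v)) (g x) := hsymm.transGen hx
    rw [h.gf v hv] at hgx
    exact (nearestAnc_eq_none_iff hs).1 hna (g x) hgx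
      ((h.mem_image hS hxv).1 hxmem)
  | some w =>
    obtain ⟨h1, h2, h3⟩ := (nearestAnc_eq_some_iff hs).1 hna
    show _ = some (f w)
    rw [nearestAnc_eq_some_iff ht]
    refine ⟨h.transGen h1, Finset.mem_image_of_mem f h2, ?_⟩
    intro z hz1 hz2 hzmem
    have hzv : z ∈ t.verts := ht.transGen_mem hz1
    have ha : TransGen s.Step v (g z) := by
      have := hsymm.transGen hz1
      rwa [h.gf v hv] at this
    have hb : TransGen s.Step (g z) w := by
      have := hsymm.transGen hz2
      rwa [h.gf w (hS h2)] at this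
    exact h3 (g z) ha hb ((h.mem_image hS hzv).1 hzmem)

theorem FIso.lastBefore_eq (hs : s.WF) (ht : t.WF) (h : FIso s t f g)
    {S : Finset ℕ} (hS : S ⊆ s.verts) {v : ℕ} (hv : v ∈ s.verts) :
    t.lastBefore (S.image f) (f v) = f (s.lastBefore S v) := by
  have hsymm := h.symm hs ht
  obtain ⟨h1, h2, h3⟩ := lastBefore_spec hs S v
  apply LBspec_unique ht (lastBefore_spec ht _ (f v))
  refine ⟨h.anc h1, ?_, ?_⟩
  · intro y w' hy hyx hyw' hw'mem
    have hyv : y ∈ t.verts := ht.anc_mem hy (h.mapsto v hv)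
    have hw'v : w' ∈ t.verts := (ht.1 y w' hyw').2
    have hay : s.Anc v (g y) := by
      have := hsymm.anc hy
      rwa [h.gf v hv] at this
    have hby : TransGen s.Step (g y) (s.lastBefore S v) := by
      have := hsymm.transGen hyx
      rwa [h.gf _ (hs.anc_mem h1 hv)] at this
    have hstep : s.Step (g y) (g w') := h.step' y w' hyw'
    exact h2 (g y) (g w') hay hby hstep ((h.mem_image hS hw'v).1 hw'mem)
  · intro w' hw'
    have hlbv : s.lastBefore S v ∈ s.verts := hs.anc_mem h1 hv
    have hw'v : w' ∈ t.verts := (ht.1 _ _ hw').2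
    have hstep : s.Step (s.lastBefore S v) (g w') := by
      have := h.step' _ _ hw'
      rwa [h.gf _ hlbv] at this
    exact (h.mem_image hS hw'v).2 (h3 (g w') hstep)

theorem FIso.pcount_eq (hs : s.WF) (ht : t.WF) (h : FIso s t f g)
    {S A : Finset ℕ} (hS : S ⊆ s.verts) (hA : A ⊆ s.verts) {j : Fin n}
    {v : ℕ} (hv : v ∈ s.verts) :
    t.pcount (S.image f) (A.image f) j (f v) = s.pcount S A j v := by
  have hsymm := h.symm hs ht
  unfold pcount
  symm
  apply Finset.card_bij (fun x _ => f x)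
  · intro x hx
    rw [Finset.mem_filter] at hx ⊢
    obtain ⟨hxS, hanc, hcol, w, hna, hwA⟩ := hx
    have hxv : x ∈ s.verts := hS hxS
    have hwv : w ∈ s.verts := hS (nearestAnc_mem hs hna)
    have hlbsome : (s.parent (s.lastBefore S x)).isSome := by
      rw [← nearestAnc_eq_parent_lastBefore hs, hna]
      rfl
    refine ⟨Finset.mem_image_of_mem f hxS, h.anc hanc, ?_, f w, ?_, ?_⟩
    · rw [h.lastBefore_eq hs ht hS hxv,
        h.colr _ (hs.anc_mem (anc_lastBefore hs S x) hxv) hlbsome, hcol]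
    · rw [h.nearestAnc_eq hs ht hS hxv, hna]
      rfl
    · intro hmem
      exact hwA ((h.mem_image' hA hwv).1 hmem)
  · intro x1 h1 x2 h2 heq
    rw [Finset.mem_filter] at h1 h2
    rw [← h.gf x1 (hS h1.1), ← h.gf x2 (hS h2.1), heq]
  · intro y hy
    rw [Finset.mem_filter] at hy
    obtain ⟨hyS, hanc, hcol, w', hna, hwA⟩ := hy
    obtain ⟨x, hxS, rfl⟩ := Finset.mem_image.1 hyS
    have hxv : x ∈ s.verts := hS hxS
    refine ⟨x, ?_, rfl⟩
    rw [Finset.mem_filter]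
    have hanc' : s.Anc v x := by
      have := hsymm.anc hanc
      rwa [h.gf v hv, h.gf x hxv] at this
    rw [h.nearestAnc_eq hs ht hS hxv] at hna
    cases hna0 : s.nearestAnc S x with
    | none =>
      rw [hna0] at hna
      cases hna
    | some w =>
      rw [hna0] at hna
      simp only [Option.map_some] at hna
      have hfw : f w = w' := Option.some.inj hna
      have hwv : w ∈ s.verts := hS (nearestAnc_mem hs hna0)
      have hlbsome : (s.parent (s.lastBefore S x)).isSome := by
        rw [← nearestAnc_eq_parent_lastBefore hs, hna0]
        rfl
      refine ⟨hxS, hanc', ?_, w, rfl, ?_⟩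
      · rw [h.lastBefore_eq hs ht hS hxv] at hcol
        rw [← hcol, h.colr _ (hs.anc_mem (anc_lastBefore hs S x) hxv) hlbsome]
      · intro hwA'
        exact hwA (hfw ▸ (h.mem_image' hA hwv).2 hwA')

theorem FIso.sroots_image (hs : s.WF) (ht : t.WF) (h : FIso s t f g)
    {S : Finset ℕ} (hS : S ⊆ s.verts) :
    t.sroots (S.image f) = (s.sroots S).image f := by
  have hsymm := h.symm hs ht
  ext y
  simp only [mem_sroots, Finset.mem_image]
  constructor
  · rintro ⟨⟨r, hrS, rfl⟩, hroot⟩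
    refine ⟨r, ⟨hrS, fun w hw hanc => ?_⟩, rfl⟩
    have : f w = f r := hroot (f w) ⟨w, hw, rfl⟩ (h.anc hanc)
    rw [← h.gf w (hS hw), this, h.gf r (hS hrS)]
  · rintro ⟨r, ⟨hrS, hroot⟩, rfl⟩
    refine ⟨⟨r, hrS, rfl⟩, fun w hw hanc => ?_⟩
    obtain ⟨w0, hw0, rfl⟩ := hw
    have hanc' : s.Anc r w0 := by
      have := hsymm.anc hanc
      rwa [h.gf r (hS hrS), h.gf w0 (hS hw0)] at this
    rw [hroot w0 hw0 hanc']

theorem FIso.compSet_image (hs : s.WF) (ht : t.WF) (h : FIso s t f g)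
    {S : Finset ℕ} (hS : S ⊆ s.verts) {r : ℕ} (hr : r ∈ s.verts) :
    t.compSet (S.image f) (f r) = (s.compSet S r).image f := by
  have hsymm := h.symm hs ht
  ext y
  simp only [mem_compSet, Finset.mem_image]
  constructor
  · rintro ⟨⟨x, hx, rfl⟩, hanc⟩
    refine ⟨x, ⟨hx, ?_⟩, rfl⟩
    have := hsymm.anc hanc
    rwa [h.gf x (hS hx), h.gf r hr] at this
  · rintro ⟨x, ⟨hx, hanc⟩, rfl⟩
    exact ⟨⟨x, hx, rfl⟩, h.anc hanc⟩

/-- restriction of isomorphic forests to corresponding sets are isomorphic. -/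
theorem FIso.restrict_piso (hs : s.WF) (ht : t.WF) (h : FIso s t f g)
    {D : Finset ℕ} (hD : D ⊆ s.verts) :
    (s.restrict D).PIso (t.restrict (D.image f)) := by
  have hsymm := h.symm hs ht
  have hvmem : ∀ x : ℕ, x ∈ D ∩ s.verts → f x ∈ D.image f ∩ t.verts := by
    intro x hx
    rw [Finset.mem_inter] at hx ⊢
    exact ⟨Finset.mem_image_of_mem f hx.1, h.mapsto x hx.2⟩
  have hvmem' : ∀ y : ℕ, y ∈ D.image f ∩ t.verts → g y ∈ D ∩ s.verts := by
    intro y hy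
    rw [Finset.mem_inter] at hy ⊢
    exact ⟨(h.mem_image hD hy.2).1 hy.1, h.mapsto' y hy.2⟩
  refine ⟨⟨fun x => ⟨f x.1, hvmem x.1 x.2⟩, fun y => ⟨g y.1, hvmem' y.1 y.2⟩,
    ?_, ?_⟩, ?_, ?_⟩
  · intro x
    exact Subtype.ext (h.gf x.1 (Finset.mem_inter.1 x.2).2)
  · intro y
    exact Subtype.ext (h.fg y.1 (Finset.mem_inter.1 y.2).2)
  · intro v w
    have hv : (v : ℕ) ∈ D ∩ s.verts := v.2
    have hvv : (v : ℕ) ∈ s.verts := (Finset.mem_inter.1 hv).2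
    show (s.restrict D).parent (v : ℕ) = some (w : ℕ) ↔
      (t.restrict (D.image f)).parent (f (v : ℕ)) = some (f (w : ℕ))
    have lhs_eq : (s.restrict D).parent (v : ℕ) = s.nearestAnc D (v : ℕ) := by
      show (if (v : ℕ) ∈ D ∩ s.verts then s.nearestAnc D (v : ℕ) else none) = _
      rw [if_pos hv]
    have rhs_eq : (t.restrict (D.image f)).parent (f (v : ℕ))
        = t.nearestAnc (D.image f) (f (v : ℕ)) := by
      show (if f (v : ℕ) ∈ D.image f ∩ t.verts
        then t.nearestAnc (D.image f) (f (v : ℕ)) else none) = _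
      rw [if_pos (hvmem _ hv)]
    rw [lhs_eq, rhs_eq, h.nearestAnc_eq hs ht hD hvv]
    constructor
    · intro heq
      rw [heq]
      rfl
    · intro heq
      cases hna0 : s.nearestAnc D (v : ℕ) with
      | none =>
        rw [hna0] at heq
        cases heq
      | some w0 =>
        rw [hna0] at heq
        simp only [Option.map_some] at heq
        have hfw : f w0 = f (w : ℕ) := Option.some.inj heq
        have hw0v : w0 ∈ s.verts := hD (nearestAnc_mem hs hna0)
        have hwv : (w : ℕ) ∈ s.verts := (Finset.mem_inter.1 w.2).2
        have : w0 = (w : ℕ) := by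
          rw [← h.gf w0 hw0v, hfw, h.gf _ hwv]
        rw [this]
  · intro v hsome
    have hv : (v : ℕ) ∈ D ∩ s.verts := v.2
    have hvv : (v : ℕ) ∈ s.verts := (Finset.mem_inter.1 hv).2
    have hsome' : (s.nearestAnc D (v : ℕ)).isSome := by
      have : (s.restrict D).parent (v : ℕ) = s.nearestAnc D (v : ℕ) := by
        show (if (v : ℕ) ∈ D ∩ s.verts then s.nearestAnc D (v : ℕ) else none) = _
        rw [if_pos hv]
      rwa [this] at hsome
    obtain ⟨w0, hw0⟩ := Option.isSome_iff_exists.1 hsome'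
    have hlbsome : (s.parent (s.lastBefore D (v : ℕ))).isSome := by
      rw [← nearestAnc_eq_parent_lastBefore hs, hw0]
      rfl
    show (t.restrict (D.image f)).color (f (v : ℕ))
      = (s.restrict D).color (v : ℕ)
    show t.color (t.lastBefore (D.image f) (f (v : ℕ)))
      = s.color (s.lastBefore D (v : ℕ))
    rw [h.lastBefore_eq hs ht hD hvv]
    exact h.colr _ (hs.anc_mem (anc_lastBefore hs D (v : ℕ)) hvv) hlbsome

end PForest

namespace PForest

section KLevel

variable (K : Type*) [Field K] [NeZero n] (q1 q2 : Fin n → K)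
variable {s t : PForest n} {f g : ℕ → ℕ}

theorem FIso.qcoef_image (hs : s.WF) (ht : t.WF) (h : FIso s t f g)
    {S A : Finset ℕ} (hS : S ⊆ s.verts) (hA : A ⊆ S) :
    qcoef K q1 q2 t (S.image f) (A.image f) = qcoef K q1 q2 s S A := by
  have hAv : A ⊆ s.verts := hA.trans hS
  have hinj : ∀ x ∈ S, ∀ y ∈ S, f x = f y → x = y := by
    intro x hx y hy heq
    rw [← h.gf x (hS hx), heq, h.gf y (hS hy)]
  unfold qcoef
  congr 1
  · refine Finset.prod_congr rfl fun j _ => ?_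
    congr 1
    rw [Finset.sum_image (fun x hx y hy => hinj x (hA hx) y (hA hy))]
    refine Finset.sum_congr rfl fun v hv => ?_
    exact h.pcount_eq hs ht hS hAv (hS (hA hv))
  · refine Finset.prod_congr rfl fun j _ => ?_
    congr 1
    rw [← h.image_sdiff hS hAv,
      Finset.sum_image (fun x hx y hy => hinj x (Finset.mem_sdiff.1 hx).1 y
        (Finset.mem_sdiff.1 hy).1 )]
    refine Finset.sum_congr rfl fun v hv => ?_
    exact h.pcount_eq hs ht hS (Finset.sdiff_subset.trans hS)
      (hS (Finset.mem_sdiff.1 hv).1)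

theorem FIso.forestMonomial_image (hs : s.WF) (ht : t.WF) (h : FIso s t f g)
    {S : Finset ℕ} (hS : S ⊆ s.verts) :
    forestMonomial K t (S.image f) = forestMonomial K s S := by
  unfold forestMonomial
  rw [h.sroots_image hs ht hS]
  rw [Finset.prod_image (fun x hx y hy heq => by
    rw [← h.gf x (hS (mem_sroots.1 hx).1), heq, h.gf y (hS (mem_sroots.1 hy).1)])]
  refine Finset.prod_congr rfl fun r hr => ?_
  have hrS : r ∈ S := (mem_sroots.1 hr).1
  have hDs : s.compSet S r ⊆ s.verts := fun x hx => hS (mem_compSet.1 hx).1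
  rw [h.compSet_image hs ht hS (hS hrS)]
  congr 1
  refine (mkClass_eq_of_piso ?_ ?_ (h.restrict_piso hs ht hDs)).symm
  · exact ⟨hs.restrict _, restrict_compSet_isTree hs hS hr⟩
  · refine ⟨ht.restrict _, ?_⟩
    have hr' : f r ∈ t.sroots (S.image f) := by
      rw [h.sroots_image hs ht hS]
      exact Finset.mem_image_of_mem f hr
    have := restrict_compSet_isTree ht (by
      intro x hx
      obtain ⟨x0, hx0, rfl⟩ := Finset.mem_image.1 hx
      exact h.mapsto x0 (hS hx0)) hr'
    rwa [h.compSet_image hs ht hS (hS hrS)] at this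

/-- isomorphism invariance of the subforest sum. -/
theorem FIso.subforestSum_eq (hs : s.WF) (ht : t.WF) (h : FIso s t f g) :
    subforestSum K q1 q2 s = subforestSum K q1 q2 t := by
  unfold subforestSum
  refine Finset.sum_nbij' (fun S => S.image f) (fun T => T.image g)
    ?_ ?_ ?_ ?_ ?_
  · intro S hSmem
    rw [Finset.mem_powerset] at hSmem ⊢
    rw [← h.verts_image]
    exact Finset.image_subset_image hSmem
  · intro T hTmem
    rw [Finset.mem_powerset] at hTmem ⊢
    intro x hx
    obtain ⟨y, hy, rfl⟩ := Finset.mem_image.1 hx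
    exact h.mapsto' y (hTmem hy)
  · intro S hSmem
    rw [Finset.mem_powerset] at hSmem
    ext x
    simp only [Finset.mem_image]
    constructor
    · rintro ⟨y, ⟨v, hv, rfl⟩, rfl⟩
      rwa [h.gf v (hSmem hv)]
    · intro hx
      exact ⟨f x, ⟨x, hx, rfl⟩, h.gf x (hSmem hx)⟩
  · intro T hTmem
    rw [Finset.mem_powerset] at hTmem
    ext x
    simp only [Finset.mem_image]
    constructor
    · rintro ⟨y, ⟨v, hv, rfl⟩, rfl⟩
      rwa [h.fg v (hTmem hv)]
    · intro hx
      exact ⟨g x, ⟨x, hx, rfl⟩, h.fg x (hTmem hx)⟩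
  · intro S hSmem
    rw [Finset.mem_powerset] at hSmem
    rw [← h.verts_image, ← h.image_sdiff (le_refl s.verts) hSmem,
      h.qcoef_image K q1 q2 hs ht (le_refl s.verts) hSmem,
      h.forestMonomial_image K hs ht hSmem,
      h.forestMonomial_image K hs ht Finset.sdiff_subset]

end KLevel

end PForest

end Inv

section Assemble

open PForest Relation

variable (K : Type*) [Field K] {n : ℕ} [NeZero n] (q1 q2 : Fin n → K)
variable {u : PForest n}

theorem forestMonomial_empty (u : PForest n) : forestMonomial K u ∅ = 1 := by
  unfold forestMonomial PForest.sroots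
  rw [Finset.filter_empty, Finset.prod_empty]

theorem pcount_self_zero (hwf : u.WF) (T : Finset ℕ) (j : Fin n) (v : ℕ) :
    u.pcount T T j v = 0 := by
  unfold PForest.pcount
  rw [Finset.card_eq_zero, Finset.filter_eq_empty_iff]
  rintro x hx ⟨-, -, w, hna, hw⟩
  exact hw (nearestAnc_mem hwf hna)

theorem qcoef_emptyset (hwf : u.WF) (T : Finset ℕ) :
    qcoef K q1 q2 u T ∅ = 1 := by
  unfold qcoef
  rw [Finset.sdiff_empty]
  have h2 : ∀ j : Fin n, ∑ v ∈ T, u.pcount T T j v = 0 :=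
    fun j => Finset.sum_eq_zero fun v _ => pcount_self_zero hwf T j v
  simp [h2]

theorem qcoef_self (hwf : u.WF) (T : Finset ℕ) :
    qcoef K q1 q2 u T T = 1 := by
  unfold qcoef
  rw [Finset.sdiff_self]
  have h2 : ∀ j : Fin n, ∑ v ∈ T, u.pcount T T j v = 0 :=
    fun j => Finset.sum_eq_zero fun v _ => pcount_self_zero hwf T j v
  simp [h2]

theorem forestMonomial_comp (hwf : u.WF) {r : ℕ} (hrv : r ∈ u.verts)
    (hp : u.parent r = none) :
    forestMonomial K u (u.compSet u.verts r) =
      MvPolynomial.X (mkClass (u.restrict (u.compSet u.verts r))) := by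
  have hrC : r ∈ u.compSet u.verts r :=
    mem_compSet.2 ⟨hrv, ReflTransGen.refl⟩
  have hsr : u.sroots (u.compSet u.verts r) = {r} := by
    apply Finset.eq_singleton_iff_unique_mem.2
    constructor
    · exact mem_sroots.2 ⟨hrC, fun w _ hanc => anc_of_parent_none hp hanc⟩
    · intro x hx
      obtain ⟨hxC, hcond⟩ := mem_sroots.1 hx
      exact (hcond r hrC (mem_compSet.1 hxC).2).symm
  have hcomp : u.compSet (u.compSet u.verts r) r = u.compSet u.verts r := by
    ext x
    simp only [mem_compSet]
    exact ⟨fun h => h.1, fun hx => ⟨hx, hx.2⟩⟩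
  unfold forestMonomial
  rw [hsr, Finset.prod_singleton, hcomp]

theorem qcoef_restrict (hwf : u.WF) {S A : Finset ℕ} (hS : S ⊆ u.verts)
    (hA : A ⊆ S) :
    qcoef K q1 q2 (u.restrict S) S A = qcoef K q1 q2 u S A := by
  unfold qcoef
  congr 1
  · refine Finset.prod_congr rfl fun j _ => ?_
    congr 1
    exact Finset.sum_congr rfl fun v hv =>
      restrict_pcount hwf hS (hA hv)
  · refine Finset.prod_congr rfl fun j _ => ?_
    congr 1
    exact Finset.sum_congr rfl fun v hv =>
      restrict_pcount hwf hS (Finset.mem_sdiff.1 hv).1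

theorem subforestSum_restrict (hwf : u.WF) {S : Finset ℕ} (hS : S ⊆ u.verts) :
    subforestSum K q1 q2 (u.restrict S) =
      ∑ A ∈ S.powerset, qcoef K q1 q2 u S A •
        (forestMonomial K u A ⊗ₜ[K] forestMonomial K u (S \ A)) := by
  unfold subforestSum
  rw [show (u.restrict S).verts = S from Finset.inter_eq_left.2 hS]
  refine Finset.sum_congr rfl fun A hA => ?_
  rw [Finset.mem_powerset] at hA
  rw [qcoef_restrict K q1 q2 hwf hS hA,
    forestMonomial_restrict K hwf hS hA,
    forestMonomial_restrict K hwf hS Finset.sdiff_subset]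

theorem subforestSum_eqvGen {a b : TreeObj n}
    (h : Relation.EqvGen (fun a b : TreeObj n => PForest.PIso a.1 b.1) a b) :
    subforestSum K q1 q2 a.1 = subforestSum K q1 q2 b.1 := by
  induction h with
  | rel x y hxy =>
    obtain ⟨f, g, hf⟩ := hxy.exists_fiso x.2.1 y.2.1
    exact hf.subforestSum_eq K q1 q2 x.2.1 y.2.1
  | refl x => rfl
  | symm x y _ ih => exact ih.symm
  | trans x y z _ _ ih1 ih2 => exact ih1.trans ih2

theorem subforestSum_out (c : TreeObj n) :
    subforestSum K q1 q2
      (Quot.out (Quot.mk (fun a b : TreeObj n => PForest.PIso a.1 b.1) c)).1 =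
      subforestSum K q1 q2 c.1 := by
  apply subforestSum_eqvGen
  exact Quot.eq.1 (Quot.out_eq _)

theorem deltaC_mono_empty (hwf : u.WF) (h0 : u.verts = ∅) :
    DeltaC K q1 q2 (forestMonomial K u u.verts) = subforestSum K q1 q2 u := by
  unfold subforestSum
  rw [h0, forestMonomial_empty, map_one, Finset.powerset_empty,
    Finset.sum_singleton, qcoef_emptyset K q1 q2 hwf, Finset.sdiff_empty,
    forestMonomial_empty, one_smul]
  exact Algebra.TensorProduct.one_def

set_option maxHeartbeats 1000000 in
/-- the main formula: `Δ` applied to the monomial of a forest is the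
subforest sum. -/
theorem deltaC_mono (hwf : u.WF) :
    DeltaC K q1 q2 (forestMonomial K u u.verts) = subforestSum K q1 q2 u := by
  suffices H : ∀ N (u : PForest n), u.verts.card ≤ N → u.WF →
      DeltaC K q1 q2 (forestMonomial K u u.verts) = subforestSum K q1 q2 u from
    H _ u le_rfl hwf
  intro N
  induction N with
  | zero =>
    intro u hcard hwf
    exact deltaC_mono_empty K q1 q2 hwf
      (Finset.card_eq_zero.1 (Nat.le_zero.1 hcard))
  | succ N ih =>
    intro u hcard hwf
    by_cases h0 : u.verts = ∅
    · exact deltaC_mono_empty K q1 q2 hwf h0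
    obtain ⟨v0, hv0⟩ := Finset.nonempty_iff_ne_empty.2 h0
    obtain ⟨r, hanc, hp⟩ := exists_root hwf (v := v0)
    have hrv : r ∈ u.verts := hwf.anc_mem hanc hv0
    have hCV : u.compSet u.verts r ⊆ u.verts :=
      fun x hx => (mem_compSet.1 hx).1
    have hC : u.AncClosed (u.compSet u.verts r) := ancClosed_compSet_root hwf hp
    have hC' : u.AncClosed (u.verts \ u.compSet u.verts r) :=
      ancClosed_sdiff_compSet_root hwf
    have hrS : r ∈ u.sroots u.verts :=
      mem_sroots.2 ⟨hrv, fun w _ hanc' => anc_of_parent_none hp hanc'⟩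
    have hrC : r ∈ u.compSet u.verts r :=
      mem_compSet.2 ⟨hrv, ReflTransGen.refl⟩
    have hsplit : u.compSet u.verts r ∪ (u.verts \ u.compSet u.verts r)
        = u.verts := Finset.union_sdiff_of_subset hCV
    -- split the monomial
    have hmono : forestMonomial K u u.verts =
        forestMonomial K u (u.compSet u.verts r) *
          forestMonomial K u (u.verts \ u.compSet u.verts r) := by
      have := forestMonomial_union K hwf hCV hC hC'
        (le_refl (u.compSet u.verts r)) (le_refl (u.verts \ u.compSet u.verts r))
      rwa [hsplit] at this
    have htree : (u.restrict (u.compSet u.verts r)).WF ∧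
        (u.restrict (u.compSet u.verts r)).IsTree :=
      ⟨hwf.restrict _, restrict_compSet_isTree hwf (le_refl u.verts) hrS⟩
    have hXC : forestMonomial K u (u.compSet u.verts r) =
        MvPolynomial.X (mkClass (u.restrict (u.compSet u.verts r))) :=
      forestMonomial_comp K hwf hrv hp
    have hdx : DeltaC K q1 q2
        (MvPolynomial.X (mkClass (u.restrict (u.compSet u.verts r)))) =
        subforestSum K q1 q2 (u.restrict (u.compSet u.verts r)) := by
      rw [show mkClass (u.restrict (u.compSet u.verts r)) =
          Quot.mk _ (⟨u.restrict (u.compSet u.verts r), htree⟩ : TreeObj n) from by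
        unfold mkClass
        exact dif_pos htree]
      unfold DeltaC
      refine (MvPolynomial.aeval_X _ _).trans ?_
      exact subforestSum_out K q1 q2 _
    have hrec : DeltaC K q1 q2
        (forestMonomial K u (u.verts \ u.compSet u.verts r)) =
        subforestSum K q1 q2 (u.restrict (u.verts \ u.compSet u.verts r)) := by
      have hv' : (u.restrict (u.verts \ u.compSet u.verts r)).verts
          = u.verts \ u.compSet u.verts r :=
        Finset.inter_eq_left.2 Finset.sdiff_subset
      have hih := ih (u.restrict (u.verts \ u.compSet u.verts r)) (by
        rw [hv']
        have hlt : (u.verts \ u.compSet u.verts r).card < u.verts.card := by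
          apply Finset.card_lt_card
          constructor
          · exact Finset.sdiff_subset
          · intro hsub
            have := hsub hrv
            rw [Finset.mem_sdiff] at this
            exact this.2 hrC
        omega) (hwf.restrict _)
      rw [hv', forestMonomial_restrict K hwf
        (Finset.sdiff_subset (s := u.verts) (t := u.compSet u.verts r))
        (le_refl (u.verts \ u.compSet u.verts r))] at hih
      exact hih
    rw [hmono, map_mul, hXC, hdx, hrec,
      subforestSum_restrict K q1 q2 hwf hCV,
      subforestSum_restrict K q1 q2 hwf Finset.sdiff_subset,
      Finset.sum_mul_sum, ← Finset.sum_product']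
    unfold subforestSum
    refine Finset.sum_nbij' (fun p => p.1 ∪ p.2) (fun S => (S ∩ u.compSet u.verts r, S \ u.compSet u.verts r)) ?_ ?_ ?_ ?_ ?_
    · rintro ⟨A, B⟩ hAB
      rw [Finset.mem_product, Finset.mem_powerset, Finset.mem_powerset] at hAB
      rw [Finset.mem_powerset]
      exact Finset.union_subset (hAB.1.trans hCV)
        (hAB.2.trans Finset.sdiff_subset)
    · intro S hS
      rw [Finset.mem_powerset] at hS
      rw [Finset.mem_product, Finset.mem_powerset, Finset.mem_powerset]
      exact ⟨Finset.inter_subset_right, Finset.sdiff_subset_sdiff hS (le_refl _)⟩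
    · rintro ⟨A, B⟩ hAB
      rw [Finset.mem_product, Finset.mem_powerset, Finset.mem_powerset] at hAB
      have h1 : (A ∪ B) ∩ u.compSet u.verts r = A := by
        ext x
        simp only [Finset.mem_inter, Finset.mem_union]
        constructor
        · rintro ⟨hx | hx, hxC⟩
          · exact hx
          · exact absurd hxC (Finset.mem_sdiff.1 (hAB.2 hx)).2
        · intro hx
          exact ⟨Or.inl hx, hAB.1 hx⟩
      have h2 : (A ∪ B) \ u.compSet u.verts r = B := by
        ext x
        simp only [Finset.mem_sdiff, Finset.mem_union]
        constructor
        · rintro ⟨hx | hx, hxC⟩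
          · exact absurd (hAB.1 hx) hxC
          · exact hx
        · intro hx
          exact ⟨Or.inr hx, (Finset.mem_sdiff.1 (hAB.2 hx)).2⟩
      show ((A ∪ B) ∩ u.compSet u.verts r, (A ∪ B) \ u.compSet u.verts r) = (A, B)
      rw [h1, h2]
    · intro S hS
      rw [Finset.mem_powerset] at hS
      show S ∩ u.compSet u.verts r ∪ S \ u.compSet u.verts r = S
      ext x
      simp only [Finset.mem_union, Finset.mem_inter, Finset.mem_sdiff]
      constructor
      · rintro (⟨h1, -⟩ | ⟨h1, -⟩) <;> exact h1
      · intro hx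
        by_cases hxC : x ∈ u.compSet u.verts r
        · exact Or.inl ⟨hx, hxC⟩
        · exact Or.inr ⟨hx, hxC⟩
    · rintro ⟨A, B⟩ hAB
      rw [Finset.mem_product, Finset.mem_powerset, Finset.mem_powerset] at hAB
      show (qcoef K q1 q2 u (u.compSet u.verts r) A • _) *
        (qcoef K q1 q2 u (u.verts \ u.compSet u.verts r) B • _) = _
      rw [smul_mul_smul_comm, Algebra.TensorProduct.tmul_mul_tmul,
        qcoef_mult q1 q2 hwf hCV hC hC' hAB.1 hAB.2,
        ← forestMonomial_union K hwf hCV hC hC' hAB.1 hAB.2]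
      have hco : (u.compSet u.verts r \ A) ∪ ((u.verts \ u.compSet u.verts r) \ B)
          = u.verts \ (A ∪ B) := by
        ext w
        simp only [Finset.mem_sdiff, Finset.mem_union]
        constructor
        · rintro (⟨h1, h2⟩ | ⟨⟨h1, h3⟩, h2⟩)
          · exact ⟨hCV h1, fun h' => h'.elim h2
              (fun hB' => (Finset.mem_sdiff.1 (hAB.2 hB')).2 h1)⟩
          · exact ⟨h1, fun h' => h'.elim (fun hA' => h3 (hAB.1 hA')) h2⟩
        · rintro ⟨h1, h2⟩
          by_cases hw : w ∈ u.compSet u.verts r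
          · exact Or.inl ⟨hw, fun hA' => h2 (Or.inl hA')⟩
          · exact Or.inr ⟨⟨h1, hw⟩, fun hB' => h2 (Or.inr hB')⟩
      rw [← forestMonomial_union K hwf hCV hC hC' Finset.sdiff_subset
        Finset.sdiff_subset, hco]

/-- the main formula for restricted forests / arbitrary subforests. -/
theorem deltaC_mono' (hwf : u.WF) {S : Finset ℕ} (hS : S ⊆ u.verts) :
    DeltaC K q1 q2 (forestMonomial K u S) =
      ∑ A ∈ S.powerset, qcoef K q1 q2 u S A •
        (forestMonomial K u A ⊗ₜ[K] forestMonomial K u (S \ A)) := by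
  have h := deltaC_mono K q1 q2 (hwf.restrict S)
  rw [show (u.restrict S).verts = S from Finset.inter_eq_left.2 hS,
    forestMonomial_restrict K hwf hS (le_refl S),
    subforestSum_restrict K q1 q2 hwf hS] at h
  exact h

theorem deltaC_X (T : TreeClass n) :
    DeltaC K q1 q2 (MvPolynomial.X T) =
      subforestSum K q1 q2 (Quot.out T).1 :=
  MvPolynomial.aeval_X _ T

theorem epsC_X (T : TreeClass n) : epsC K (MvPolynomial.X T) = 0 :=
  MvPolynomial.aeval_X _ T

theorem X_eq_mono_out (T : TreeClass n) :
    MvPolynomial.X (R := K) T =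
      forestMonomial K (Quot.out T).1 (Quot.out T).1.verts := by
  have h := forestMonomial_tree K (t := (Quot.out T).1) (Quot.out T).2
  rw [h]
  congr 1
  have h2 : (⟨(Quot.out T).1, (Quot.out T).2⟩ : TreeObj n) = Quot.out T := rfl
  exact (Quot.out_eq T).symm

theorem epsC_mono (hwf : u.WF) {S : Finset ℕ} (hS : S.Nonempty) :
    epsC K (forestMonomial K u S) = 0 := by
  unfold forestMonomial
  rw [map_prod]
  obtain ⟨r, hr⟩ := sroots_nonempty hwf hS
  exact Finset.prod_eq_zero hr (epsC_X K _)

theorem sdiff_sdiff_helper {V A S : Finset ℕ} (hA : A ⊆ S) :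
    (V \ A) \ (S \ A) = V \ S := by
  ext w
  simp only [Finset.mem_sdiff]
  constructor
  · rintro ⟨⟨h1, h2⟩, h3⟩
    exact ⟨h1, fun hw => h3 ⟨hw, h2⟩⟩
  · rintro ⟨h1, h2⟩
    exact ⟨⟨h1, fun hw => h2 (hA hw)⟩, fun hw => h2 hw.1⟩

set_option maxHeartbeats 1600000 in
set_option synthInstance.maxHeartbeats 1000000 in
theorem coassoc_X (T : TreeClass n) :
    (TensorProduct.assoc K (Cn K n) (Cn K n) (Cn K n))
        ((TensorProduct.map (DeltaC K q1 q2).toLinearMap LinearMap.id)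
          (DeltaC K q1 q2 (MvPolynomial.X T)))
      = (TensorProduct.map LinearMap.id (DeltaC K q1 q2).toLinearMap)
          (DeltaC K q1 q2 (MvPolynomial.X T)) := by
  obtain ⟨t, ht⟩ : ∃ t : TreeObj n, Quot.out T = t := ⟨_, rfl⟩
  have hwf : t.1.WF := t.2.1
  rw [deltaC_X, ht]
  unfold subforestSum
  rw [map_sum, map_sum, map_sum]
  have hL : ∀ S ∈ t.1.verts.powerset,
      (TensorProduct.assoc K (Cn K n) (Cn K n) (Cn K n))
        ((TensorProduct.map (DeltaC K q1 q2).toLinearMap LinearMap.id)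
          (qcoef K q1 q2 t.1 t.1.verts S •
            (forestMonomial K t.1 S ⊗ₜ[K] forestMonomial K t.1 (t.1.verts \ S))))
      = ∑ A ∈ S.powerset,
          (qcoef K q1 q2 t.1 t.1.verts S * qcoef K q1 q2 t.1 S A) •
            (forestMonomial K t.1 A ⊗ₜ[K] (forestMonomial K t.1 (S \ A) ⊗ₜ[K]
              forestMonomial K t.1 (t.1.verts \ S))) := by
    intro S hSmem
    rw [Finset.mem_powerset] at hSmem
    rw [map_smul, map_smul, TensorProduct.map_tmul, AlgHom.toLinearMap_apply,
      LinearMap.id_apply, deltaC_mono' K q1 q2 hwf hSmem,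
      TensorProduct.sum_tmul, map_sum, Finset.smul_sum]
    refine Finset.sum_congr rfl fun A hA => ?_
    rw [← TensorProduct.smul_tmul', map_smul, TensorProduct.assoc_tmul, smul_smul]
  have hR : ∀ S ∈ t.1.verts.powerset,
      (TensorProduct.map LinearMap.id (DeltaC K q1 q2).toLinearMap)
        (qcoef K q1 q2 t.1 t.1.verts S •
          (forestMonomial K t.1 S ⊗ₜ[K] forestMonomial K t.1 (t.1.verts \ S)))
      = ∑ B ∈ (t.1.verts \ S).powerset,
          (qcoef K q1 q2 t.1 t.1.verts S *
            qcoef K q1 q2 t.1 (t.1.verts \ S) B) •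
            (forestMonomial K t.1 S ⊗ₜ[K] (forestMonomial K t.1 B ⊗ₜ[K]
              forestMonomial K t.1 ((t.1.verts \ S) \ B))) := by
    intro S hSmem
    rw [map_smul, TensorProduct.map_tmul, AlgHom.toLinearMap_apply,
      LinearMap.id_apply, deltaC_mono' K q1 q2 hwf Finset.sdiff_subset,
      TensorProduct.tmul_sum, Finset.smul_sum]
    refine Finset.sum_congr rfl fun B hB => ?_
    rw [TensorProduct.tmul_smul, smul_smul]
  rw [Finset.sum_congr rfl hL, Finset.sum_congr rfl hR,
    Finset.sum_sigma' t.1.verts.powerset (fun S => S.powerset),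
    Finset.sum_sigma' t.1.verts.powerset (fun S => (t.1.verts \ S).powerset)]
  refine Finset.sum_nbij' (fun p => ⟨p.2, p.1 \ p.2⟩) (fun p => ⟨p.1 ∪ p.2, p.1⟩)
    ?_ ?_ ?_ ?_ ?_
  · rintro ⟨S, A⟩ hp
    rw [Finset.mem_sigma, Finset.mem_powerset, Finset.mem_powerset] at hp
    rw [Finset.mem_sigma, Finset.mem_powerset, Finset.mem_powerset]
    exact ⟨hp.2.trans hp.1, Finset.sdiff_subset_sdiff hp.1 (le_refl _)⟩
  · rintro ⟨S, B⟩ hp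
    rw [Finset.mem_sigma, Finset.mem_powerset, Finset.mem_powerset] at hp
    rw [Finset.mem_sigma, Finset.mem_powerset, Finset.mem_powerset]
    exact ⟨Finset.union_subset hp.1 (hp.2.trans Finset.sdiff_subset),
      Finset.subset_union_left⟩
  · rintro ⟨S, A⟩ hp
    rw [Finset.mem_sigma, Finset.mem_powerset, Finset.mem_powerset] at hp
    show (⟨A ∪ S \ A, A⟩ : (_ : Finset ℕ) × Finset ℕ) = ⟨S, A⟩
    rw [Finset.union_sdiff_of_subset hp.2]
  · rintro ⟨S, B⟩ hp
    rw [Finset.mem_sigma, Finset.mem_powerset, Finset.mem_powerset] at hp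
    show (⟨S, (S ∪ B) \ S⟩ : (_ : Finset ℕ) × Finset ℕ) = ⟨S, B⟩
    have : (S ∪ B) \ S = B := by
      ext x
      simp only [Finset.mem_sdiff, Finset.mem_union]
      constructor
      · rintro ⟨hx | hx, hxS⟩
        · exact absurd hx hxS
        · exact hx
      · intro hx
        exact ⟨Or.inr hx, (Finset.mem_sdiff.1 (hp.2 hx)).2⟩
    rw [this]
  · rintro ⟨S, A⟩ hp
    rw [Finset.mem_sigma, Finset.mem_powerset, Finset.mem_powerset] at hp
    show _ = (qcoef K q1 q2 t.1 t.1.verts A *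
        qcoef K q1 q2 t.1 (t.1.verts \ A) (S \ A)) •
        (forestMonomial K t.1 A ⊗ₜ[K] (forestMonomial K t.1 (S \ A) ⊗ₜ[K]
          forestMonomial K t.1 ((t.1.verts \ A) \ (S \ A))))
    rw [sdiff_sdiff_helper hp.2, qcoef_coassoc q1 q2 hwf hp.2 hp.1]

theorem counit_left_X (T : TreeClass n) :
    (TensorProduct.lid K (Cn K n))
        ((TensorProduct.map (epsC K).toLinearMap LinearMap.id)
          (DeltaC K q1 q2 (MvPolynomial.X T))) = MvPolynomial.X T := by
  obtain ⟨t, ht⟩ : ∃ t : TreeObj n, Quot.out T = t := ⟨_, rfl⟩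
  have hwf : t.1.WF := t.2.1
  rw [deltaC_X, ht]
  unfold subforestSum
  rw [map_sum, map_sum]
  rw [Finset.sum_eq_single ∅ ?h1 ?h2]
  · rw [map_smul, map_smul, TensorProduct.map_tmul, AlgHom.toLinearMap_apply,
      LinearMap.id_apply, forestMonomial_empty, map_one, Finset.sdiff_empty,
      TensorProduct.lid_tmul, one_smul, qcoef_emptyset K q1 q2 hwf, one_smul]
    rw [X_eq_mono_out K T, ht]
  case h1 =>
    intro S hSmem hSne
    rw [Finset.mem_powerset] at hSmem
    rw [map_smul, map_smul, TensorProduct.map_tmul, AlgHom.toLinearMap_apply,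
      epsC_mono K hwf (Finset.nonempty_iff_ne_empty.2 hSne),
      TensorProduct.zero_tmul, map_zero, smul_zero]
  case h2 =>
    intro h
    exact absurd (Finset.empty_mem_powerset _) h

theorem counit_right_X (T : TreeClass n) :
    (TensorProduct.rid K (Cn K n))
        ((TensorProduct.map LinearMap.id (epsC K).toLinearMap)
          (DeltaC K q1 q2 (MvPolynomial.X T))) = MvPolynomial.X T := by
  obtain ⟨t, ht⟩ : ∃ t : TreeObj n, Quot.out T = t := ⟨_, rfl⟩
  have hwf : t.1.WF := t.2.1
  rw [deltaC_X, ht]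
  unfold subforestSum
  rw [map_sum, map_sum]
  rw [Finset.sum_eq_single t.1.verts ?h1 ?h2]
  · rw [map_smul, map_smul, TensorProduct.map_tmul, AlgHom.toLinearMap_apply,
      LinearMap.id_apply, Finset.sdiff_self, forestMonomial_empty, map_one,
      TensorProduct.rid_tmul, one_smul, qcoef_self K q1 q2 hwf, one_smul]
    rw [X_eq_mono_out K T, ht]
  case h1 =>
    intro S hSmem hSne
    rw [Finset.mem_powerset] at hSmem
    have hne : (t.1.verts \ S).Nonempty :=
      Finset.sdiff_nonempty.2 fun hsub => hSne (Finset.Subset.antisymm hSmem hsub)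
    rw [map_smul, map_smul, TensorProduct.map_tmul, AlgHom.toLinearMap_apply,
      epsC_mono K hwf hne, TensorProduct.tmul_zero, map_zero, smul_zero]
  case h2 =>
    intro h
    exact absurd (Finset.mem_powerset_self _) h

end Assemble

end Aux

theorem Cn_bialgebra (K : Type*) [Field K] (n : ℕ) [NeZero n]
    (q1 q2 : Fin n → K) :
    -- Δ is given on the monomial basis by the subforest formula
    (∀ u : PForest n, u.WF →
        DeltaC K q1 q2 (forestMonomial K u u.verts) =
          ∑ S ∈ u.verts.powerset,
            qcoef K q1 q2 u u.verts S •
              (forestMonomial K u S ⊗ₜ[K] forestMonomial K u (u.verts \ S))) ∧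
    -- ε kills every tree
    (∀ T : TreeClass n, epsC K (MvPolynomial.X T) = 0) ∧
    -- Δ is coassociative
    (∀ x : Cn K n,
        (TensorProduct.assoc K (Cn K n) (Cn K n) (Cn K n))
            ((TensorProduct.map (DeltaC K q1 q2).toLinearMap LinearMap.id)
              (DeltaC K q1 q2 x))
          = (TensorProduct.map LinearMap.id (DeltaC K q1 q2).toLinearMap)
              (DeltaC K q1 q2 x)) ∧
    -- ε is a counit for Δ
    (∀ x : Cn K n,
        (TensorProduct.lid K (Cn K n))
            ((TensorProduct.map (epsC K).toLinearMap LinearMap.id)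
              (DeltaC K q1 q2 x)) = x) ∧
    (∀ x : Cn K n,
        (TensorProduct.rid K (Cn K n))
            ((TensorProduct.map LinearMap.id (epsC K).toLinearMap)
              (DeltaC K q1 q2 x)) = x) := by
  classical
  -- pointwise identification lemmas between the linear-level and
  -- algebra-level tensor constructions
  have hmap1 : ∀ z : TensorProduct K (Cn K n) (Cn K n),
      (TensorProduct.map (DeltaC K q1 q2).toLinearMap
        (LinearMap.id (R := K) (M := Cn K n))) z
      = (Algebra.TensorProduct.map (DeltaC K q1 q2) (AlgHom.id K (Cn K n))) z := by
    intro z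
    have h : TensorProduct.map (DeltaC K q1 q2).toLinearMap
        (LinearMap.id (R := K) (M := Cn K n))
        = (Algebra.TensorProduct.map (DeltaC K q1 q2)
            (AlgHom.id K (Cn K n))).toLinearMap :=
      TensorProduct.ext' fun a b => by
        simp [Algebra.TensorProduct.map_tmul]
    rw [h, AlgHom.toLinearMap_apply]
  have hmap2 : ∀ z : TensorProduct K (Cn K n) (Cn K n),
      (TensorProduct.map (LinearMap.id (R := K) (M := Cn K n))
        (DeltaC K q1 q2).toLinearMap) z
      = (Algebra.TensorProduct.map (AlgHom.id K (Cn K n)) (DeltaC K q1 q2)) z := by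
    intro z
    have h : TensorProduct.map (LinearMap.id (R := K) (M := Cn K n))
        (DeltaC K q1 q2).toLinearMap
        = (Algebra.TensorProduct.map (AlgHom.id K (Cn K n))
            (DeltaC K q1 q2)).toLinearMap :=
      TensorProduct.ext' fun a b => by
        simp [Algebra.TensorProduct.map_tmul]
    rw [h, AlgHom.toLinearMap_apply]
  have hmape : ∀ z : TensorProduct K (Cn K n) (Cn K n),
      (TensorProduct.map (epsC K (n := n)).toLinearMap
        (LinearMap.id (R := K) (M := Cn K n))) z
      = (Algebra.TensorProduct.map (epsC K) (AlgHom.id K (Cn K n))) z := by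
    intro z
    have h : TensorProduct.map (epsC K (n := n)).toLinearMap
        (LinearMap.id (R := K) (M := Cn K n))
        = (Algebra.TensorProduct.map (epsC K)
            (AlgHom.id K (Cn K n))).toLinearMap :=
      TensorProduct.ext' fun a b => by
        simp [Algebra.TensorProduct.map_tmul]
    rw [h, AlgHom.toLinearMap_apply]
  have hmape' : ∀ z : TensorProduct K (Cn K n) (Cn K n),
      (TensorProduct.map (LinearMap.id (R := K) (M := Cn K n))
        (epsC K (n := n)).toLinearMap) z
      = (Algebra.TensorProduct.map (AlgHom.id K (Cn K n)) (epsC K)) z := by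
    intro z
    have h : TensorProduct.map (LinearMap.id (R := K) (M := Cn K n))
        (epsC K (n := n)).toLinearMap
        = (Algebra.TensorProduct.map (AlgHom.id K (Cn K n))
            (epsC K)).toLinearMap :=
      TensorProduct.ext' fun a b => by
        simp [Algebra.TensorProduct.map_tmul]
    rw [h, AlgHom.toLinearMap_apply]
  have hassoc : ∀ z,
      (TensorProduct.assoc K (Cn K n) (Cn K n) (Cn K n)) z
      = (Algebra.TensorProduct.assoc K K K (Cn K n) (Cn K n) (Cn K n)) z := by
    intro z
    have h : (TensorProduct.assoc K (Cn K n) (Cn K n) (Cn K n)).toLinearMap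
        = (Algebra.TensorProduct.assoc K K K (Cn K n) (Cn K n) (Cn K n)).toLinearMap :=
      TensorProduct.ext_threefold fun a b c => by
        simp [TensorProduct.assoc_tmul, Algebra.TensorProduct.assoc_tmul]
    exact LinearMap.congr_fun h z
  have hlid : ∀ z : TensorProduct K K (Cn K n),
      (TensorProduct.lid K (Cn K n)) z
      = (Algebra.TensorProduct.lid K (Cn K n)) z := by
    intro z
    have h : (TensorProduct.lid K (Cn K n)).toLinearMap
        = (Algebra.TensorProduct.lid K (Cn K n)).toLinearMap :=
      TensorProduct.ext' fun a b => by
        simp [TensorProduct.lid_tmul]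
    exact LinearMap.congr_fun h z
  have hrid : ∀ z : TensorProduct K (Cn K n) K,
      (TensorProduct.rid K (Cn K n)) z
      = (Algebra.TensorProduct.rid K K (Cn K n)) z := by
    intro z
    have h : (TensorProduct.rid K (Cn K n)).toLinearMap
        = (Algebra.TensorProduct.rid K K (Cn K n)).toLinearMap :=
      TensorProduct.ext' fun a b => by
        simp [TensorProduct.rid_tmul]
    exact LinearMap.congr_fun h z
  refine ⟨?_, ?_, ?_, ?_, ?_⟩
  · -- the subforest formula
    intro u hu
    exact deltaC_mono K q1 q2 hu
  · -- the counit kills trees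
    intro T
    exact epsC_X K T
  · -- coassociativity
    have key : (Algebra.TensorProduct.assoc K K K (Cn K n) (Cn K n) (Cn K n)).toAlgHom.comp
        ((Algebra.TensorProduct.map (DeltaC K q1 q2) (AlgHom.id K (Cn K n))).comp
          (DeltaC K q1 q2))
        = (Algebra.TensorProduct.map (AlgHom.id K (Cn K n))
            (DeltaC K q1 q2)).comp (DeltaC K q1 q2) := by
      apply MvPolynomial.algHom_ext
      intro T
      simp only [AlgHom.comp_apply]
      have := coassoc_X K q1 q2 T
      rw [hmap1, hassoc, hmap2] at this
      exact this
    intro x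
    rw [hmap1, hassoc, hmap2]
    exact AlgHom.congr_fun key x
  · -- left counit
    have key : (Algebra.TensorProduct.lid K (Cn K n)).toAlgHom.comp
        ((Algebra.TensorProduct.map (epsC K) (AlgHom.id K (Cn K n))).comp
          (DeltaC K q1 q2))
        = AlgHom.id K (Cn K n) := by
      apply MvPolynomial.algHom_ext
      intro T
      simp only [AlgHom.comp_apply, AlgHom.id_apply]
      have := counit_left_X K q1 q2 T
      rw [hmape, hlid] at this
      exact this
    intro x
    rw [hmape, hlid]
    exact AlgHom.congr_fun key x
  · -- right counit
    have key : (Algebra.TensorProduct.rid K K (Cn K n)).toAlgHom.comp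
        ((Algebra.TensorProduct.map (AlgHom.id K (Cn K n)) (epsC K)).comp
          (DeltaC K q1 q2))
        = AlgHom.id K (Cn K n) := by
      apply MvPolynomial.algHom_ext
      intro T
      simp only [AlgHom.comp_apply, AlgHom.id_apply]
      have := counit_right_X K q1 q2 T
      rw [hmape', hrid] at this
      exact this
    intro x
    rw [hmape', hrid]
    exact AlgHom.congr_fun key x
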